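/- arXiv:1511.04837 — 2 statements merged into one kernel-verified Lean document; each statement's English description precedes it below -/
import Mathlib

section
/- Let p be a prime, γ ≥ 1 an integer, C ⊆ {0, 1, …, p^γ − 1} a nonempty set of integers, and Ω = ⋃_{c∈C} (c + p^γ ℤ_p). Then Ω tiles ℚ_p by translation if and only if the image of C in ℤ/p^γℤ tiles ℤ/p^γℤ. -/
open MeasureTheory

noncomputable section

section Aux

variable {p : ℕ} [Fact p.Prime]

/-- Key reduction lemma: a unit-ball element is within `p^{-γ}` of an integer `m` iff its
reduction mod `p^γ` equals `m`. -/
lemma padic_key (γ : ℕ) (x : ℚ_[p]) (h : ‖x‖ ≤ 1) (m : ℤ) :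
    ‖x - (m : ℚ_[p])‖ ≤ (p : ℝ) ^ (-(γ : ℤ)) ↔
      PadicInt.toZModPow γ (⟨x, h⟩ : ℤ_[p]) = (m : ZMod (p ^ γ)) := by
  set y : ℤ_[p] := ⟨x, h⟩ with hy
  have hx : x - (m : ℚ_[p]) = ((y - (m : ℤ_[p]) : ℤ_[p]) : ℚ_[p]) := by
    push_cast
    rfl
  rw [hx, ← PadicInt.norm_def, PadicInt.norm_le_pow_iff_mem_span_pow,
    ← PadicInt.ker_toZModPow, RingHom.mem_ker, map_sub, map_intCast, sub_eq_zero]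

lemma padic_int_norm_le (γ : ℕ) (m : ℤ) (h : (m : ZMod (p ^ γ)) = 0) :
    ‖(m : ℚ_[p])‖ ≤ (p : ℝ) ^ (-(γ : ℤ)) := by
  rw [Padic.norm_int_le_pow_iff_dvd]
  exact_mod_cast (ZMod.intCast_zmod_eq_zero_iff_dvd m (p ^ γ)).1 h

end Aux

/-- `Ω = ⋃_{c∈C}(c + p^γ ℤ_p)` tiles `ℚ_p` by translation iff the image of `C`
in `ℤ/p^γℤ` tiles `ℤ/p^γℤ`. -/
theorem compactOpen_tiles_iff_zmod_tile
    (p γ : ℕ) [Fact p.Prime] (hγ : 1 ≤ γ)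
    (C : Finset ℕ) (hCne : C.Nonempty) (hCsub : ∀ c ∈ C, c < p ^ γ)
    [MeasurableSpace ℚ_[p]] [BorelSpace ℚ_[p]]
    (μ : Measure ℚ_[p]) [μ.IsAddHaarMeasure]
    (Ω : Set ℚ_[p])
    (hΩ : Ω = ⋃ c ∈ C, {x : ℚ_[p] | ‖x - (c : ℚ_[p])‖ ≤ (p : ℝ) ^ (-(γ : ℤ))}) :
    (∃ T : Set ℚ_[p], ∀ᵐ x ∂μ, ∃! t, t ∈ T ∧ x - t ∈ Ω) ↔
    (∃ T : Set (ZMod (p ^ γ)), ∀ x : ZMod (p ^ γ),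
      ∃! ct : ZMod (p ^ γ) × ZMod (p ^ γ),
        ct.1 ∈ C.image (fun c : ℕ => (c : ZMod (p ^ γ))) ∧ ct.2 ∈ T ∧ ct.1 + ct.2 = x) := by
  haveI : NeZero (p ^ γ) := ⟨pow_ne_zero _ (Fact.out (p := p.Prime)).ne_zero⟩
  have hp1 : (1 : ℝ) < p := by exact_mod_cast (Fact.out (p := p.Prime)).one_lt
  set r : ℝ := (p : ℝ) ^ (-(γ : ℤ)) with hr_def
  have hr0 : 0 < r := zpow_pos (by linarith) _
  have hr1 : r ≤ 1 := zpow_le_one_of_nonpos₀ (le_of_lt hp1) (by simp)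
  have hcast : ∀ w : ZMod (p ^ γ), ((w.val : ℕ) : ZMod (p ^ γ)) = w := by
    intro w
    rw [ZMod.natCast_val, ZMod.cast_id]
  -- membership in Ω
  have hmem : ∀ x : ℚ_[p], x ∈ Ω ↔ ∃ c ∈ C, ‖x - (c : ℚ_[p])‖ ≤ r := by
    intro x; subst hΩ; simp [Set.mem_iUnion]
  -- Ω is invariant under perturbations of size ≤ r
  have hΩinv : ∀ u v : ℚ_[p], ‖u - v‖ ≤ r → u ∈ Ω → v ∈ Ω := by
    intro u v huv hu
    obtain ⟨c, hc, hnc⟩ := (hmem u).1 hu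
    refine (hmem v).2 ⟨c, hc, ?_⟩
    rw [show v - (c : ℚ_[p]) = (v - u) + (u - (c : ℚ_[p])) by ring]
    refine le_trans (Padic.nonarchimedean _ _) ?_
    simp only [sup_le_iff]
    exact ⟨by rwa [norm_sub_rev], hnc⟩
  constructor
  · -- forward direction
    rintro ⟨T, hT⟩
    set P : ℚ_[p] → Prop := fun x => ∃! t, t ∈ T ∧ x - t ∈ Ω with hP_def
    have hPinv : ∀ x y : ℚ_[p], ‖x - y‖ ≤ r → P x → P y := by
      rintro x y hxy ⟨t, ⟨htT, hxt⟩, huniq⟩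
      have key : ∀ t' : ℚ_[p], (x - t' ∈ Ω ↔ y - t' ∈ Ω) := by
        intro t'
        constructor
        · exact fun h => hΩinv _ _ (by rw [show x - t' - (y - t') = x - y by ring]; exact hxy) h
        · exact fun h => hΩinv _ _
            (by rw [show y - t' - (x - t') = -(x - y) by ring, norm_neg]; exact hxy) h
      exact ⟨t, ⟨htT, (key t).1 hxt⟩, fun t' ht' => huniq t' ⟨ht'.1, (key t').2 ht'.2⟩⟩
    have hall : ∀ x : ℚ_[p], P x := by
      intro x
      by_contra hx
      have hsub : Metric.ball x r ⊆ {y | ¬ P y} := fun y hy hPy =>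
        hx (hPinv y x (by rw [← dist_eq_norm]; exact le_of_lt (Metric.mem_ball.1 hy)) hPy)
      have h0 : μ (Metric.ball x r) = 0 := measure_mono_null hsub (ae_iff.1 hT)
      exact absurd h0 (Metric.isOpen_ball.measure_pos μ ⟨x, Metric.mem_ball_self hr0⟩).ne'
    -- now define the ZMod tiling complement
    refine ⟨{w : ZMod (p ^ γ) | ∃ t ∈ T, ‖t - ((w.val : ℕ) : ℚ_[p])‖ ≤ r}, ?_⟩
    intro z
    set x : ℚ_[p] := ((z.val : ℕ) : ℚ_[p]) with hx_def
    obtain ⟨t, ⟨htT, hxt⟩, huniq⟩ := hall x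
    obtain ⟨c, hcC, hnc⟩ := (hmem _).1 hxt
    set t0 : ZMod (p ^ γ) := z - (c : ZMod (p ^ γ)) with ht0_def
    -- t0 is in the complement set, witnessed by t
    have ht0mem : ∃ t' ∈ T, ‖t' - ((t0.val : ℕ) : ℚ_[p])‖ ≤ r := by
      refine ⟨t, htT, ?_⟩
      rw [show t - ((t0.val : ℕ) : ℚ_[p])
          = -(x - t - (c : ℚ_[p])) + (((z.val : ℤ) - c - t0.val : ℤ) : ℚ_[p]) by push_cast; ring]
      refine le_trans (Padic.nonarchimedean _ _) ?_
      simp only [sup_le_iff, norm_neg]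
      refine ⟨hnc, padic_int_norm_le γ _ ?_⟩
      push_cast
      rw [hcast z, hcast t0, ht0_def]
      ring
    refine ⟨⟨(c : ZMod (p ^ γ)), t0⟩, ⟨Finset.mem_image.2 ⟨c, hcC, rfl⟩, ht0mem, by
      simp [ht0_def]⟩, ?_⟩
    rintro ⟨d, u⟩ ⟨hd, hu, hsum⟩
    obtain ⟨c', hc'C, hc'd⟩ := Finset.mem_image.1 hd
    obtain ⟨t', ht'T, ht'u⟩ := hu
    simp only at hsum hc'd
    -- show x - t' ∈ Ω, witnessed by c'
    have hn' : ‖x - t' - (c' : ℚ_[p])‖ ≤ r := by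
      rw [show x - t' - (c' : ℚ_[p])
          = (((z.val : ℤ) - u.val - c' : ℤ) : ℚ_[p]) + (((u.val : ℕ) : ℚ_[p]) - t') by
        push_cast; ring]
      refine le_trans (Padic.nonarchimedean _ _) ?_
      simp only [sup_le_iff]
      constructor
      · refine padic_int_norm_le γ _ ?_
        push_cast
        rw [hcast z, hcast u, hc'd, ← hsum]
        ring
      · rwa [norm_sub_rev]
    have hxt' : x - t' ∈ Ω := (hmem _).2 ⟨c', hc'C, hn'⟩
    have htt' : t' = t := huniq t' ⟨ht'T, hxt'⟩
    rw [htt'] at hn'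
    -- deduce c ≡ c' mod p^γ
    have hcc' : ((c : ℕ) : ZMod (p ^ γ)) = ((c' : ℕ) : ZMod (p ^ γ)) := by
      have h1 : ‖(((c : ℤ) - c' : ℤ) : ℚ_[p])‖ ≤ r := by
        rw [show ((((c : ℤ) - c' : ℤ)) : ℚ_[p])
            = (x - t - (c' : ℚ_[p])) + -(x - t - (c : ℚ_[p])) by push_cast; ring]
        refine le_trans (Padic.nonarchimedean _ _) ?_
        simp only [sup_le_iff, norm_neg]
        exact ⟨hn', hnc⟩
      have h2 : (p : ℤ) ^ γ ∣ ((c : ℤ) - c') := (Padic.norm_int_le_pow_iff_dvd _ _).1 h1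
      have h3 : (((c : ℤ) - c' : ℤ) : ZMod (p ^ γ)) = 0 :=
        (ZMod.intCast_zmod_eq_zero_iff_dvd _ _).2 (by exact_mod_cast h2)
      have h4 : ((c : ℤ) : ZMod (p ^ γ)) = ((c' : ℤ) : ZMod (p ^ γ)) := by
        rwa [Int.cast_sub, sub_eq_zero] at h3
      exact_mod_cast h4
    have hd_eq : d = ((c : ℕ) : ZMod (p ^ γ)) := by rw [← hc'd, hcc']
    have hu_eq : u = t0 := by
      rw [ht0_def, ← hsum, hd_eq]; ring
    simp [hd_eq, hu_eq]
  · -- backward direction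
    rintro ⟨T0, hT0⟩
    set A : AddSubgroup ℚ_[p] := (PadicInt.subring p).toAddSubgroup with hA_def
    have hA_mem : ∀ x : ℚ_[p], x ∈ A ↔ ‖x‖ ≤ 1 := fun x => PadicInt.mem_subring_iff p
    set rep : ℚ_[p] → ℚ_[p] := fun x => Quotient.out ((x : ℚ_[p] ⧸ A)) with hrep_def
    have hout : ∀ x : ℚ_[p], ((rep x : ℚ_[p]) : ℚ_[p] ⧸ A) = (x : ℚ_[p] ⧸ A) := by
      intro x
      simp only [hrep_def]
      exact QuotientAddGroup.out_eq' _
    have hrep1 : ∀ x : ℚ_[p], ‖x - rep x‖ ≤ 1 := by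
      intro x
      have h2 : -(rep x) + x ∈ A := QuotientAddGroup.eq.1 (hout x)
      rw [← neg_add_eq_sub]
      exact (hA_mem _).1 h2
    have hrep2 : ∀ x y : ℚ_[p], ‖x - y‖ ≤ 1 → rep x = rep y := by
      intro x y hxy
      have h : ((x : ℚ_[p] ⧸ A)) = (y : ℚ_[p] ⧸ A) := by
        rw [QuotientAddGroup.eq]
        rw [show -x + y = -(x - y) by ring]
        exact (hA_mem _).2 (by rwa [norm_neg])
      simp only [hrep_def, h]
    have hrepid : ∀ x : ℚ_[p], rep (rep x) = rep x := by
      intro x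
      have h := hout x
      simp only [hrep_def] at h ⊢
      rw [h]
    refine ⟨{t : ℚ_[p] | ∃ w ∈ T0, ∃ x0 : ℚ_[p], t = ((w.val : ℕ) : ℚ_[p]) + rep x0}, ?_⟩
    refine ae_of_all μ ?_
    intro x
    have hs : ‖x - rep x‖ ≤ 1 := hrep1 x
    set z : ZMod (p ^ γ) := PadicInt.toZModPow γ (⟨x - rep x, hs⟩ : ℤ_[p]) with hz_def
    obtain ⟨⟨cbar, t0⟩, ⟨hc, ht0, hsum⟩, huniq⟩ := hT0 z
    obtain ⟨c, hcC, hcbar⟩ := Finset.mem_image.1 hc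
    simp only at hsum ht0
    refine ⟨((t0.val : ℕ) : ℚ_[p]) + rep x, ⟨⟨t0, ht0, x, rfl⟩, ?_⟩, ?_⟩
    · refine (hmem _).2 ⟨c, hcC, ?_⟩
      rw [show x - (((t0.val : ℕ) : ℚ_[p]) + rep x) - (c : ℚ_[p])
          = (x - rep x) - (((t0.val + c : ℕ) : ℤ) : ℚ_[p]) by push_cast; ring]
      rw [hr_def, padic_key γ _ hs, ← hz_def]
      push_cast
      rw [hcast t0, hcbar, ← hsum]
      ring
    · rintro t' ⟨⟨w, hw, x0, rfl⟩, hΩ'⟩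
      obtain ⟨c', hc'C, hn'⟩ := (hmem _).1 hΩ'
      have hx0 : rep x0 = rep x := by
        have h1 : ‖x - rep x0‖ ≤ 1 := by
          rw [show x - rep x0
              = (x - (((w.val : ℕ) : ℚ_[p]) + rep x0) - ((c' : ℕ) : ℚ_[p]))
                + (((w.val + c' : ℕ) : ℤ) : ℚ_[p]) by push_cast; ring]
          refine le_trans (Padic.nonarchimedean _ _) ?_
          simp only [sup_le_iff]
          exact ⟨le_trans hn' hr1, Padic.norm_int_le_one _⟩
        have h2 := hrep2 x (rep x0) h1
        rw [hrepid] at h2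
        exact h2.symm
      rw [hx0] at hn' ⊢
      have h2 : ((c' : ZMod (p ^ γ)) : ZMod (p ^ γ)) + w = z := by
        rw [show x - (((w.val : ℕ) : ℚ_[p]) + rep x) - ((c' : ℕ) : ℚ_[p])
            = (x - rep x) - (((w.val + c' : ℕ) : ℤ) : ℚ_[p]) by push_cast; ring] at hn'
        rw [hr_def, padic_key γ _ hs, ← hz_def] at hn'
        push_cast at hn'
        rw [hcast w] at hn'
        rw [hn']
        ring
      have h4 := huniq ((c' : ZMod (p ^ γ)), w)
        ⟨Finset.mem_image.2 ⟨c', hc'C, rfl⟩, hw, h2⟩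
      have h5 : w = t0 := congrArg Prod.snd h4
      rw [h5]
end
end

section
/- Let p be a prime, ψ a standard character of ℚ_p, and F a nonempty finite subset of ℚ_p. Then the uniform probability measure on F is a spectral measure — that is, there exists Λ ⊆ ℚ_p with #Λ = #F such that ∑_{c∈F} ψ((λ − λ′)c) = 0 for all distinct λ, λ′ ∈ Λ — if and only if #F = p^{#I_F}, where I_F = {v_p(x − y) : x, y ∈ F, x ≠ y}. -/
noncomputable section

/-- A standard character of `ℚ_p`. -/
def IsStdChar (p : ℕ) [Fact p.Prime] (ψ : ℚ_[p] → ℂ) : Prop :=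
  Continuous ψ ∧ (∀ x y, ψ (x + y) = ψ x * ψ y) ∧ (∀ x, ‖ψ x‖ = 1) ∧
    (∀ x : ℚ_[p], ‖x‖ ≤ 1 → ψ x = 1) ∧ ∃ x : ℚ_[p], ‖x‖ ≤ p ∧ ψ x ≠ 1

/-- The set of admissible `p`-orders of a set `E ⊆ ℚ_p`. -/
def pOrders (p : ℕ) [Fact p.Prime] (E : Set ℚ_[p]) : Set ℤ :=
  {n : ℤ | ∃ x ∈ E, ∃ y ∈ E, x ≠ y ∧ (x - y).valuation = n}

namespace SpecAux

variable {p : ℕ} [Fact p.Prime] {ψ : ℚ_[p] → ℂ}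

lemma p_prime : p.Prime := Fact.out

lemma one_lt_pR : (1 : ℝ) < (p : ℝ) := by
  exact_mod_cast (p_prime (p := p)).one_lt

lemma pR_pos : (0 : ℝ) < (p : ℝ) := lt_trans one_pos one_lt_pR

lemma pQ_ne_zero : (p : ℚ_[p]) ≠ 0 := by
  exact_mod_cast (p_prime (p := p)).ne_zero

section Char

variable (hψ : IsStdChar p ψ)
include hψ

lemma psi_add (x y : ℚ_[p]) : ψ (x + y) = ψ x * ψ y := hψ.2.1 x y

lemma psi_ne_zero (x : ℚ_[p]) : ψ x ≠ 0 := by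
  intro h
  have := hψ.2.2.1 x
  rw [h] at this; simp at this

lemma psi_zero : ψ 0 = 1 := by
  have h := psi_add hψ 0 0
  rw [add_zero] at h
  have := psi_ne_zero hψ 0
  field_simp at h
  tauto

lemma psi_neg_mul (x : ℚ_[p]) : ψ (-x) * ψ x = 1 := by
  rw [← psi_add hψ, neg_add_cancel, psi_zero hψ]

lemma psi_of_norm_le_one {x : ℚ_[p]} (h : ‖x‖ ≤ 1) : ψ x = 1 := hψ.2.2.2.1 x h

lemma psi_nat_mul (n : ℕ) (x : ℚ_[p]) : ψ ((n : ℚ_[p]) * x) = ψ x ^ n := by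
  induction n with
  | zero => simp [psi_zero hψ]
  | succ k ih =>
      have : ((k + 1 : ℕ) : ℚ_[p]) * x = (k : ℚ_[p]) * x + x := by push_cast; ring
      rw [this, psi_add hψ, ih, pow_succ]

lemma psi_pow_nat (n : ℕ) (x : ℚ_[p]) : ψ x ^ n = ψ ((n : ℚ_[p]) * x) :=
  (psi_nat_mul hψ n x).symm

omit hψ in
/-- integer approximation of a `p`-adic number of norm `≤ 1`. -/
lemma exists_nat_approx (u : ℚ_[p]) (hu : ‖u‖ ≤ 1) (K : ℕ) :
    ∃ m : ℕ, ‖u - (m : ℚ_[p])‖ ≤ (p : ℝ) ^ (-(K : ℤ)) := by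
  set u' : ℤ_[p] := ⟨u, hu⟩ with hu'
  refine ⟨u'.appr K, ?_⟩
  have h1 : ‖u' - (u'.appr K : ℤ_[p])‖ ≤ (p : ℝ) ^ (-(K : ℤ)) := by
    rw [show (-(K:ℤ)) = -(K:ℕ) from rfl]
    exact (PadicInt.norm_le_pow_iff_mem_span_pow _ K).2 (PadicInt.appr_spec K u')
  have h2 : ((u' - (u'.appr K : ℤ_[p]) : ℤ_[p]) : ℚ_[p]) = u - (u'.appr K : ℚ_[p]) := by
    push_cast [hu']
    rfl
  rwa [PadicInt.norm_def, h2] at h1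

/-- If `‖y‖ = p` then `ψ y ≠ 1`. -/
lemma psi_ne_one_of_norm_eq_p {y : ℚ_[p]} (hy : ‖y‖ = (p : ℝ)) : ψ y ≠ 1 := by
  obtain ⟨x₀, hx₀le, hx₀ne⟩ := hψ.2.2.2.2
  have hy0 : y ≠ 0 := by
    intro h; rw [h, norm_zero] at hy; exact absurd hy.symm (ne_of_gt pR_pos)
  -- `u = x₀ / y` has norm ≤ 1
  have hxnorm : ‖x₀‖ ≤ (p : ℝ) := hx₀le
  have hu : ‖x₀ / y‖ ≤ 1 := by
    rw [norm_div, hy, div_le_one pR_pos]; exact hxnorm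
  obtain ⟨m, hm⟩ := exists_nat_approx (x₀ / y) hu 1
  have hsplit : x₀ = (m : ℚ_[p]) * y + (x₀ / y - m) * y := by
    field_simp
    ring
  have hsmall : ‖(x₀ / y - (m : ℚ_[p])) * y‖ ≤ 1 := by
    rw [norm_mul, hy]
    calc ‖x₀ / y - (m : ℚ_[p])‖ * (p : ℝ) ≤ (p : ℝ) ^ (-(1 : ℕ) : ℤ) * (p : ℝ) := by
          apply mul_le_mul_of_nonneg_right hm (le_of_lt pR_pos)
      _ = 1 := by
          rw [zpow_neg]
          push_cast
          rw [zpow_one]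
          field_simp
          exact div_self (ne_of_gt pR_pos)
  intro hy1
  apply hx₀ne
  rw [hsplit, psi_add hψ, psi_nat_mul hψ, hy1, one_pow, one_mul,
    psi_of_norm_le_one hψ hsmall]

/-- The fundamental equivalence. -/
lemma psi_eq_one_iff (x : ℚ_[p]) : ψ x = 1 ↔ ‖x‖ ≤ 1 := by
  constructor
  · intro h1
    by_contra hn
    push_neg at hn
    have hx0 : x ≠ 0 := by
      intro h; rw [h, norm_zero] at hn; linarith
    have hval : ‖x‖ = (p : ℝ) ^ (-x.valuation) := Padic.norm_eq_zpow_neg_valuation hx0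
    -- valuation is negative
    have hvneg : x.valuation < 0 := by
      by_contra hv
      push_neg at hv
      have : (p:ℝ) ^ (-x.valuation) ≤ (p:ℝ) ^ (0:ℤ) :=
        (zpow_le_zpow_iff_right₀ one_lt_pR).2 (by omega)
      rw [zpow_zero] at this
      rw [hval] at hn; linarith
    set j : ℕ := (-x.valuation).toNat with hj
    have hj1 : 1 ≤ j := by omega
    have hjval : (j : ℤ) = -x.valuation := by omega
    -- consider y = p^(j-1) * x
    set y : ℚ_[p] := ((p ^ (j-1) : ℕ) : ℚ_[p]) * x with hyd
    have hynorm : ‖y‖ = (p : ℝ) := by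
      rw [hyd, norm_mul]
      push_cast
      rw [Padic.norm_p_pow, hval, ← zpow_add₀ (ne_of_gt pR_pos)]
      have : (-(j - 1 : ℕ) : ℤ) + -x.valuation = 1 := by
        push_cast [Nat.cast_sub hj1] at *
        omega
      rw [this, zpow_one]
    exact psi_ne_one_of_norm_eq_p hψ hynorm (by rw [hyd, psi_nat_mul hψ, h1, one_pow])
  · exact psi_of_norm_le_one hψ

lemma psi_sub_eq_one_iff (a b : ℚ_[p]) : ψ a = ψ b ↔ ‖a - b‖ ≤ 1 := by
  rw [← psi_eq_one_iff hψ (a - b)]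
  constructor
  · intro h
    have : ψ a = ψ (a - b) * ψ b := by
      rw [← psi_add hψ]; ring_nf
    rw [this] at h
    have hb := psi_ne_zero hψ b
    have := mul_right_cancel₀ hb (by rw [h, one_mul] : ψ (a-b) * ψ b = 1 * ψ b)
    exact this
  · intro h
    have : ψ a = ψ (a - b) * ψ b := by rw [← psi_add hψ]; ring_nf
    rw [this, h, one_mul]

end Char

end SpecAux

namespace SpecAux

variable {p : ℕ} [Fact p.Prime] {ψ : ℚ_[p] → ℂ}

section Char

variable (hψ : IsStdChar p ψ)
include hψ

/-- `ψ(p^{-K})` is a primitive `p^K`-th root of unity and computes all values of `ψ`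
on `p^{-K} ℤ_p`. -/
lemma exists_prim_root (K : ℕ) (hK : 1 ≤ K) :
    ∃ ξ : ℂ, IsPrimitiveRoot ξ (p ^ K) ∧
      ∀ x : ℚ_[p], ‖x‖ ≤ (p : ℝ) ^ (K : ℤ) → ∃ m, m < p ^ K ∧ ψ x = ξ ^ m := by
  set ξ : ℂ := ψ ((p : ℚ_[p]) ^ (-(K : ℤ))) with hξd
  have hpow : ∀ n : ℕ, ξ ^ n = ψ ((n : ℚ_[p]) * (p : ℚ_[p]) ^ (-(K : ℤ))) := by
    intro n; rw [psi_nat_mul hψ]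
  have htop : ξ ^ (p ^ K) = 1 := by
    rw [hpow]
    have : ((p ^ K : ℕ) : ℚ_[p]) * (p : ℚ_[p]) ^ (-(K : ℤ)) = 1 := by
      push_cast
      rw [← zpow_natCast (p : ℚ_[p]) K, ← zpow_add₀ pQ_ne_zero]
      simp
    rw [this]
    exact psi_of_norm_le_one hψ (by norm_num)
  have hmid : ξ ^ (p ^ (K - 1)) ≠ 1 := by
    rw [hpow]
    have heq : ((p ^ (K-1) : ℕ) : ℚ_[p]) * (p : ℚ_[p]) ^ (-(K : ℤ)) =
        (p : ℚ_[p]) ^ (-(1 : ℤ)) := by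
      push_cast
      rw [← zpow_natCast (p : ℚ_[p]) (K-1), ← zpow_add₀ pQ_ne_zero]
      congr 1
      have : ((K - 1 : ℕ) : ℤ) = (K : ℤ) - 1 := by omega
      rw [this]; ring
    rw [heq]
    apply psi_ne_one_of_norm_eq_p hψ
    rw [Padic.norm_p_zpow]
    simp
  have horder : orderOf ξ = p ^ K := by
    have : K = (K - 1) + 1 := by omega
    rw [this] at htop ⊢
    exact orderOf_eq_prime_pow hmid htop
  have hprim : IsPrimitiveRoot ξ (p ^ K) := by
    rw [← horder]; exact IsPrimitiveRoot.orderOf ξ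
  refine ⟨ξ, hprim, ?_⟩
  intro x hx
  have hu : ‖x * (p : ℚ_[p]) ^ (K : ℤ)‖ ≤ 1 := by
    rw [norm_mul]
    have : ‖(p : ℚ_[p]) ^ (K : ℤ)‖ = (p : ℝ) ^ (-(K:ℤ)) := Padic.norm_p_zpow K
    rw [this]
    calc ‖x‖ * (p:ℝ) ^ (-(K:ℤ)) ≤ (p:ℝ)^(K:ℤ) * (p:ℝ) ^ (-(K:ℤ)) := by
          apply mul_le_mul_of_nonneg_right hx (zpow_nonneg (le_of_lt pR_pos) _)
      _ = 1 := by rw [← zpow_add₀ (ne_of_gt pR_pos)]; simp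
  obtain ⟨m, hm⟩ := exists_nat_approx (x * (p : ℚ_[p]) ^ (K : ℤ)) hu K
  have hxsplit : x = (m : ℚ_[p]) * (p : ℚ_[p]) ^ (-(K : ℤ))
      + (x * (p : ℚ_[p]) ^ (K : ℤ) - m) * (p : ℚ_[p]) ^ (-(K : ℤ)) := by
    have hne : (p : ℚ_[p]) ^ (K : ℤ) ≠ 0 := zpow_ne_zero _ pQ_ne_zero
    field_simp [zpow_neg]
    rw [add_sub_cancel, ← mul_assoc, mul_comm _ x, mul_assoc, ← zpow_add₀ pQ_ne_zero]; simp
  have hpsix : ψ x = ξ ^ m := by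
    rw [hxsplit, psi_add hψ, ← hpow]
    have hnorm2 : ‖(x * (p : ℚ_[p]) ^ (K : ℤ) - m) * (p : ℚ_[p]) ^ (-(K : ℤ))‖ ≤ 1 := by
      rw [norm_mul, Padic.norm_p_zpow]
      calc ‖x * (p : ℚ_[p]) ^ (K : ℤ) - (m:ℚ_[p])‖ * (p:ℝ) ^ (-(-(K:ℤ)))
          ≤ (p:ℝ) ^ (-(K:ℤ)) * (p:ℝ) ^ ((K:ℤ)) := by
            rw [neg_neg]
            exact mul_le_mul_of_nonneg_right hm (zpow_nonneg (le_of_lt pR_pos) _)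
        _ = 1 := by rw [← zpow_add₀ (ne_of_gt pR_pos)]; simp
    rw [psi_of_norm_le_one hψ hnorm2, mul_one]
  refine ⟨m % p ^ K, Nat.mod_lt _ (pow_pos p_prime.pos K), ?_⟩
  rw [hpsix, ← pow_mod_orderOf, horder]

end Char

/-- Vanishing rational combinations of `p^K`-th roots of unity have coefficients
constant on classes mod `p^{K-1}`. -/
lemma lemL (K : ℕ) (hK : 1 ≤ K) {ξ : ℂ} (hξ : IsPrimitiveRoot ξ (p ^ K)) (b : ℕ → ℕ)
    (h0 : ∑ i ∈ Finset.range (p ^ K), (b i : ℂ) * ξ ^ i = 0) :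
    ∀ j < p, b (j * p ^ (K - 1)) = b 0 := by
  classical
  have hp0 : 0 < p := p_prime.pos
  intro j hj
  set n := p ^ K with hn
  set a := p ^ (K - 1) with ha
  have hpa : a * p = n := by
    rw [ha, hn]
    rw [← pow_succ]
    congr 1
    omega
  have hja : j * a < n := by
    have h : j * a < p * a := Nat.mul_lt_mul_of_pos_right hj (pow_pos hp0 _)
    rw [mul_comm p a, hpa] at h
    exact h
  set f : Polynomial ℚ := ∑ i ∈ Finset.range n, Polynomial.C ((b i : ℚ)) * Polynomial.X ^ i with hf
  have hcoeff : ∀ i, i < n → f.coeff i = (b i : ℚ) := by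
    intro i hi
    rw [hf, Polynomial.finset_sum_coeff]
    simp only [Polynomial.coeff_C_mul, Polynomial.coeff_X_pow]
    rw [Finset.sum_eq_single i]
    · simp
    · intro c _ hc
      simp [Ne.symm hc]
    · intro h; exact absurd (Finset.mem_range.2 hi) h
  have haev : Polynomial.aeval ξ f = 0 := by
    rw [hf]
    rw [map_sum]
    simp only [map_mul, Polynomial.aeval_C, map_pow, Polynomial.aeval_X]
    rw [← h0]
    apply Finset.sum_congr rfl
    intro i _
    norm_num
  by_cases hfz : f = 0
  · have hb : ∀ i, i < n → b i = 0 := by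
      intro i hi
      have := hcoeff i hi
      rw [hfz] at this
      simp at this
      exact_mod_cast this.symm
    rw [hb _ hja, hb 0 (pow_pos hp0 K)]
  have hdvd : minpoly ℚ ξ ∣ f := minpoly.dvd ℚ ξ haev
  have hmp : Polynomial.cyclotomic n ℚ = minpoly ℚ ξ :=
    Polynomial.cyclotomic_eq_minpoly_rat hξ (pow_pos hp0 K)
  obtain ⟨g, hg⟩ : Polynomial.cyclotomic n ℚ ∣ f := hmp ▸ hdvd
  have hcyc : Polynomial.cyclotomic n ℚ = ∑ i ∈ Finset.range p, (Polynomial.X ^ a) ^ i := by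
    have : n = p ^ ((K - 1) + 1) := by rw [hn]; congr 1; omega
    rw [this, Polynomial.cyclotomic_prime_pow_eq_geom_sum p_prime]
  -- degree bound for g
  have hgz : g ≠ 0 := by
    intro h; rw [h, mul_zero] at hg; exact hfz hg
  have hcycz : Polynomial.cyclotomic n ℚ ≠ 0 := Polynomial.cyclotomic_ne_zero n ℚ
  have hdegf : f.natDegree ≤ n - 1 := by
    apply Polynomial.natDegree_le_iff_coeff_eq_zero.2
    intro N hN
    rw [hf, Polynomial.finset_sum_coeff]
    apply Finset.sum_eq_zero
    intro i hi
    rw [Polynomial.coeff_C_mul, Polynomial.coeff_X_pow]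
    have : N ≠ i := by
      have := Finset.mem_range.1 hi
      omega
    simp [this]
  have hdegcyc : (Polynomial.cyclotomic n ℚ).natDegree = a * (p - 1) := by
    rw [Polynomial.natDegree_cyclotomic, hn, Nat.totient_prime_pow p_prime (by omega)]
  have hdegg : g.natDegree < a := by
    have hmul : f.natDegree = (Polynomial.cyclotomic n ℚ).natDegree + g.natDegree := by
      rw [hg, Polynomial.natDegree_mul hcycz hgz]
    have hp2 : 2 ≤ p := p_prime.two_le
    have han : 1 ≤ a := pow_pos hp0 _
    have : a * (p-1) + g.natDegree ≤ n - 1 := by rw [← hdegcyc, ← hmul]; exact hdegf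
    have h' : a * (p - 1) = a * p - a := by rw [Nat.mul_sub, mul_one]
    have h'' : a ≤ a * p := Nat.le_mul_of_pos_right a hp0
    omega
  -- compute coefficients of cyclotomic * g at j*a
  have hkey : ∀ j', j' < p → f.coeff (j' * a) = g.coeff 0 := by
    intro j' hj'
    rw [hg, hcyc, Finset.sum_mul, Polynomial.finset_sum_coeff]
    rw [Finset.sum_eq_single j']
    · rw [← pow_mul, mul_comm (Polynomial.X ^ (a * j')) g,
        Polynomial.coeff_mul_X_pow', mul_comm a j']
      simp
    · intro i hi hne
      rw [← pow_mul, mul_comm (Polynomial.X ^ (a * i)) g, Polynomial.coeff_mul_X_pow']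
      by_cases hle : a * i ≤ j' * a
      · rw [if_pos hle]
        apply Polynomial.coeff_eq_zero_of_natDegree_lt
        have h1 : i < j' := by
          by_contra hc
          push_neg at hc
          have : j' * a ≤ a * i := by
            rw [mul_comm j' a]
            exact Nat.mul_le_mul_left a hc
          have : a * i = j' * a := le_antisymm hle this
          rw [mul_comm a i] at this
          have han : 0 < a := pow_pos hp0 _
          exact hne (Nat.eq_of_mul_eq_mul_right han this)
        have : j' * a - a * i = (j' - i) * a := by
          rw [mul_comm a i, ← Nat.sub_mul]
        rw [this]
        calc g.natDegree < a := hdegg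
          _ ≤ (j' - i) * a := Nat.le_mul_of_pos_left a (by omega)
      · rw [if_neg hle]
    · intro h
      exact absurd (Finset.mem_range.2 hj') h
  have h1 : f.coeff (j * a) = g.coeff 0 := hkey j hj
  have h2 : f.coeff 0 = g.coeff 0 := by
    have := hkey 0 (by omega)
    simpa using this
  have hb1 : (b (j * a) : ℚ) = (b 0 : ℚ) := by
    rw [← hcoeff _ hja, ← hcoeff 0 (pow_pos hp0 K), h1, h2]
  exact_mod_cast hb1

end SpecAux

namespace SpecAux

variable {p : ℕ} [Fact p.Prime] {ψ : ℚ_[p] → ℂ}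

lemma valuation_eq_of_norm {x : ℚ_[p]} (hx : x ≠ 0) {n : ℤ} (h : ‖x‖ = (p : ℝ) ^ n) :
    x.valuation = -n := by
  have h2 := Padic.norm_eq_zpow_neg_valuation hx
  rw [h2] at h
  have h3 := zpow_right_injective₀ pR_pos (ne_of_gt one_lt_pR) h
  omega

lemma norm_eq_zpow_of_val {x : ℚ_[p]} (hx : x ≠ 0) {n : ℤ} (h : x.valuation = -n) :
    ‖x‖ = (p : ℝ) ^ n := by
  rw [Padic.norm_eq_zpow_neg_valuation hx, h, neg_neg]

section Char

variable (hψ : IsStdChar p ψ)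
include hψ

lemma t_ne_zero_of_sum_zero {E : Finset ℚ_[p]} (hE : E.Nonempty) {t : ℚ_[p]}
    (h0 : ∑ c ∈ E, ψ (t * c) = 0) : t ≠ 0 := by
  intro h
  rw [h] at h0
  simp only [zero_mul, psi_zero hψ, Finset.sum_const, nsmul_eq_mul, mul_one] at h0
  have := hE.card_ne_zero
  exact this (by exact_mod_cast h0)

/-- Core equidistribution lemma:  if the character sum over `E` at frequency `t`
vanishes, then the number of elements of `E` in a ball of radius `‖t‖⁻¹` centered at `y`
(with `y` within `p·‖t‖⁻¹` of `x₀ ∈ E`) equals the count for the ball at `x₀`. -/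
lemma AE {E : Finset ℚ_[p]} {t x₀ : ℚ_[p]} (hx₀ : x₀ ∈ E)
    (h0 : ∑ c ∈ E, ψ (t * c) = 0) {y : ℚ_[p]}
    (hy : ψ ((p : ℚ_[p]) * t * (y - x₀)) = 1) :
    (E.filter fun c => ψ (t * (c - y)) = 1).card
      = (E.filter fun c => ψ (t * (c - x₀)) = 1).card := by
  classical
  have hE : E.Nonempty := ⟨x₀, hx₀⟩
  have ht : t ≠ 0 := t_ne_zero_of_sum_zero hψ hE h0
  -- choose K
  obtain ⟨K, hK1, hKbig⟩ : ∃ K : ℕ, 1 ≤ K ∧ ∀ c ∈ E, ‖t * (c - x₀)‖ ≤ (p : ℝ) ^ (K : ℤ) := by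
    set B := E.sup' hE (fun c => ‖t * (c - x₀)‖) with hB
    obtain ⟨n, hn⟩ := pow_unbounded_of_one_lt B (one_lt_pR (p:=p))
    refine ⟨n + 1, by omega, fun c hc => ?_⟩
    have h1 : ‖t * (c - x₀)‖ ≤ B := Finset.le_sup' (fun c => ‖t * (c - x₀)‖) hc
    have h2 : (p : ℝ) ^ n ≤ (p : ℝ) ^ ((n + 1 : ℕ) : ℤ) := by
      rw [← zpow_natCast (p:ℝ) n]
      apply (zpow_le_zpow_iff_right₀ one_lt_pR).2
      omega
    linarith
  obtain ⟨ξ, hξ, hval⟩ := exists_prim_root hψ K hK1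
  have hpK : 0 < p ^ K := pow_pos (p_prime (p:=p)).pos K
  set idx : ℚ_[p] → ℕ :=
    fun c => if h : ∃ m, m < p ^ K ∧ ψ (t * (c - x₀)) = ξ ^ m then h.choose else 0 with hidx
  have hidx_spec : ∀ c ∈ E, idx c < p ^ K ∧ ψ (t * (c - x₀)) = ξ ^ (idx c) := by
    intro c hc
    have hex := hval _ (hKbig c hc)
    rw [hidx]
    simp only [dif_pos hex]
    exact ⟨hex.choose_spec.1, hex.choose_spec.2⟩
  set b : ℕ → ℕ := fun i => (E.filter fun c => idx c = i).card with hb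
  have hsum : ∑ i ∈ Finset.range (p ^ K), (b i : ℂ) * ξ ^ i = 0 := by
    have hmaps : ∀ c ∈ E, idx c ∈ Finset.range (p ^ K) :=
      fun c hc => Finset.mem_range.2 (hidx_spec c hc).1
    have h1 := Finset.sum_fiberwise_of_maps_to hmaps (fun c => ψ (t * (c - x₀)))
    have h2 : ∑ c ∈ E, ψ (t * (c - x₀)) = 0 := by
      have hfac : ∀ c : ℚ_[p], ψ (t * (c - x₀)) = ψ (t * c) * ψ (-(t * x₀)) := by
        intro c; rw [← psi_add hψ]; ring_nf
      calc ∑ c ∈ E, ψ (t * (c - x₀)) = (∑ c ∈ E, ψ (t * c)) * ψ (-(t * x₀)) := by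
            rw [Finset.sum_mul]
            exact Finset.sum_congr rfl fun c _ => hfac c
        _ = 0 := by rw [h0, zero_mul]
    calc ∑ i ∈ Finset.range (p ^ K), (b i : ℂ) * ξ ^ i
        = ∑ i ∈ Finset.range (p ^ K), ∑ c ∈ E.filter (fun c => idx c = i),
            ψ (t * (c - x₀)) := by
          apply Finset.sum_congr rfl
          intro i _
          have : ∀ c ∈ E.filter (fun c => idx c = i), ψ (t * (c - x₀)) = ξ ^ i := by
            intro c hc
            obtain ⟨hcE, hci⟩ := Finset.mem_filter.1 hc
            rw [(hidx_spec c hcE).2, hci]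
          rw [Finset.sum_congr rfl this, Finset.sum_const, hb, nsmul_eq_mul]
      _ = 0 := by rw [h1]; exact h2
  have hLL := lemL K hK1 hξ b hsum
  -- identify the fiber of y
  have hwnorm : ‖t * (y - x₀)‖ ≤ (p : ℝ) ^ (K : ℤ) := by
    have h1 : ‖(p : ℚ_[p]) * (t * (y - x₀))‖ ≤ 1 := by
      rw [← psi_eq_one_iff hψ, ← mul_assoc]; exact hy
    rw [norm_mul, Padic.norm_p] at h1
    have h2 : ‖t * (y - x₀)‖ ≤ (p : ℝ) := by
      rw [inv_mul_le_iff₀ pR_pos, mul_one] at h1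
      exact h1
    calc ‖t * (y - x₀)‖ ≤ (p:ℝ) := h2
      _ = (p:ℝ) ^ (1:ℤ) := (zpow_one _).symm
      _ ≤ (p:ℝ) ^ (K:ℤ) := (zpow_le_zpow_iff_right₀ one_lt_pR).2 (by omega)
  obtain ⟨m, hm, hmeq⟩ := hval _ hwnorm
  have hmp : ξ ^ (m * p) = 1 := by
    rw [pow_mul, ← hmeq, psi_pow_nat hψ, ← mul_assoc]
    exact hy
  have hdvd : p ^ K ∣ m * p := hξ.dvd_of_pow_eq_one _ hmp
  obtain ⟨j, hjm, hj⟩ : ∃ j, m = j * p ^ (K - 1) ∧ j < p := by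
    have hKK : p ^ K = p ^ (K - 1) * p := by
      rw [← pow_succ]; congr 1; omega
    rw [hKK] at hdvd
    have h3 : p ^ (K - 1) ∣ m := by
      rcases hdvd with ⟨u, hu⟩
      have hp0 : 0 < p := (p_prime (p:=p)).pos
      refine ⟨u, ?_⟩
      have : m * p = p ^ (K-1) * u * p := by rw [hu]; ring
      exact Nat.eq_of_mul_eq_mul_right hp0 this
    obtain ⟨j, hj⟩ := h3
    refine ⟨j, by rw [hj, mul_comm], ?_⟩
    by_contra hc
    push_neg at hc
    have hKm : p ^ K ≤ m := by
      calc p ^ K = p ^ (K-1) * p := hKK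
        _ ≤ p ^ (K-1) * j := Nat.mul_le_mul_left _ hc
        _ = m := by rw [hj]
    omega
  have hja : j * p ^ (K - 1) < p ^ K := hjm ▸ hm
  -- fibers as index sets
  have key : ∀ (z : ℚ_[p]) (i : ℕ), i < p ^ K → ψ (t * (z - x₀)) = ξ ^ i →
      E.filter (fun c => ψ (t * (c - z)) = 1) = E.filter (fun c => idx c = i) := by
    intro z i hi hz
    apply Finset.filter_congr
    intro c hc
    have hspec := hidx_spec c hc
    have hsplit : ψ (t * (c - z)) * ψ (t * (z - x₀)) = ψ (t * (c - x₀)) := by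
      rw [← psi_add hψ]; ring_nf
    constructor
    · intro h1
      rw [h1, one_mul, hz] at hsplit
      exact hξ.pow_inj hspec.1 hi (hspec.2.symm.trans hsplit.symm)
    · intro h1
      have h2 : ψ (t * (c - x₀)) = ξ ^ i := by rw [hspec.2, h1]
      rw [hz, h2] at hsplit
      have hξ0 : (ξ : ℂ) ^ i ≠ 0 := by
        intro hzz
        have := hξ.ne_zero (by omega : p ^ K ≠ 0)
        exact (pow_ne_zero i this) hzz
      exact mul_right_cancel₀ hξ0 (by rw [hsplit, one_mul])
  have hy_fiber := key y (j * p ^ (K-1)) hja (by rw [hmeq, hjm])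
  have hx_fiber := key x₀ 0 hpK (by rw [sub_self, mul_zero, psi_zero hψ, pow_zero])
  rw [hy_fiber, hx_fiber]
  exact hLL j hj

/-- Existence of a pair at the critical distance from a vanishing character sum. -/
lemma exists_pair {E : Finset ℚ_[p]} (hE : E.Nonempty) {t : ℚ_[p]}
    (h0 : ∑ c ∈ E, ψ (t * c) = 0) :
    t ≠ 0 ∧ ∃ x ∈ E, ∃ y ∈ E, x ≠ y ∧ (x - y).valuation = -t.valuation - 1 := by
  classical
  have ht : t ≠ 0 := t_ne_zero_of_sum_zero hψ hE h0
  obtain ⟨x₀, hx₀⟩ := hE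
  set y : ℚ_[p] := x₀ + t⁻¹ * (p : ℚ_[p])⁻¹ with hyd
  have hy : ψ ((p : ℚ_[p]) * t * (y - x₀)) = 1 := by
    have : (p : ℚ_[p]) * t * (y - x₀) = 1 := by
      rw [hyd]
      field_simp
      rw [add_sub_cancel_left, mul_one_div_cancel pQ_ne_zero]
    rw [this]
    exact psi_of_norm_le_one hψ (by norm_num)
  have hAE := AE hψ hx₀ h0 hy
  have hx_mem : x₀ ∈ E.filter (fun c => ψ (t * (c - x₀)) = 1) := by
    apply Finset.mem_filter.2 ⟨hx₀, ?_⟩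
    rw [sub_self, mul_zero, psi_zero hψ]
  have hpos : 0 < (E.filter (fun c => ψ (t * (c - y)) = 1)).card := by
    rw [hAE]
    exact Finset.card_pos.2 ⟨x₀, hx_mem⟩
  obtain ⟨c, hc⟩ := Finset.card_pos.1 hpos
  obtain ⟨hcE, hc1⟩ := Finset.mem_filter.1 hc
  have htn : 0 < ‖t‖ := norm_pos_iff.2 ht
  have hcynorm : ‖c - y‖ ≤ ‖t‖⁻¹ := by
    have h1 : ‖t * (c - y)‖ ≤ 1 := (psi_eq_one_iff hψ _).1 hc1
    rw [norm_mul] at h1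
    rw [← le_div_iff₀' htn] at h1
    simpa [one_div] using h1
  have hyxnorm : ‖y - x₀‖ = ‖t‖⁻¹ * (p : ℝ) := by
    rw [hyd]
    simp only [add_sub_cancel_left]
    rw [norm_mul, norm_inv, norm_inv, Padic.norm_p, inv_inv]
  have hlt : ‖c - y‖ < ‖y - x₀‖ := by
    rw [hyxnorm]
    calc ‖c - y‖ ≤ ‖t‖⁻¹ := hcynorm
      _ < ‖t‖⁻¹ * (p:ℝ) := by
          nth_rewrite 1 [← mul_one (‖t‖⁻¹)]
          exact mul_lt_mul_of_pos_left one_lt_pR (inv_pos.2 htn)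
  have hcx : ‖c - x₀‖ = ‖t‖⁻¹ * (p : ℝ) := by
    have : c - x₀ = (c - y) + (y - x₀) := by ring
    rw [this, Padic.add_eq_max_of_ne (ne_of_lt hlt), max_eq_right (le_of_lt hlt), hyxnorm]
  have hcx0 : c - x₀ ≠ 0 := by
    intro h
    rw [h, norm_zero] at hcx
    have : (0:ℝ) < ‖t‖⁻¹ * (p:ℝ) := mul_pos (inv_pos.2 htn) pR_pos
    linarith
  have hcne : c ≠ x₀ := fun h => hcx0 (by rw [h, sub_self])
  refine ⟨ht, c, hcE, x₀, hx₀, hcne, ?_⟩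
  have hnormval : ‖c - x₀‖ = (p:ℝ) ^ (t.valuation + 1) := by
    rw [hcx, Padic.norm_eq_zpow_neg_valuation ht, ← zpow_neg, neg_neg,
      zpow_add₀ (ne_of_gt pR_pos), zpow_one]
  have := valuation_eq_of_norm hcx0 hnormval
  omega

end Char

end SpecAux

namespace SpecAux

variable {p : ℕ} [Fact p.Prime] {ψ : ℚ_[p] → ℂ}

open Finset in
/-- The finite set of admissible orders of a finite set. -/
noncomputable def iset (E : Finset ℚ_[p]) : Finset ℤ := by
  classical
  exact ((E ×ˢ E).filter fun q => q.1 ≠ q.2).image fun q => (q.1 - q.2).valuation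

lemma mem_iset {E : Finset ℚ_[p]} {n : ℤ} :
    n ∈ iset E ↔ ∃ x ∈ E, ∃ y ∈ E, x ≠ y ∧ (x - y).valuation = n := by
  classical
  unfold iset
  simp only [Finset.mem_image, Finset.mem_filter, Finset.mem_product]
  constructor
  · rintro ⟨⟨x, y⟩, ⟨⟨hx, hy⟩, hne⟩, hval⟩
    exact ⟨x, hx, y, hy, hne, hval⟩
  · rintro ⟨x, hx, y, hy, hne, hval⟩
    exact ⟨⟨x, y⟩, ⟨⟨hx, hy⟩, hne⟩, hval⟩

lemma pOrders_eq_iset (E : Finset ℚ_[p]) : pOrders p (↑E : Set ℚ_[p]) = ↑(iset E) := by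
  ext n
  simp only [pOrders, Set.mem_setOf_eq, Finset.coe_sort_coe, Finset.mem_coe, mem_iset]

lemma val_ge_iff_norm {x : ℚ_[p]} (hx : x ≠ 0) {n : ℤ} :
    ‖x‖ ≤ (p : ℝ) ^ (-n) ↔ n ≤ x.valuation := by
  rw [Padic.norm_eq_zpow_neg_valuation hx, zpow_le_zpow_iff_right₀ one_lt_pR]
  omega

section Char

variable (hψ : IsStdChar p ψ)
include hψ

lemma gl_eq_iff (n : ℤ) (c c' : ℚ_[p]) :
    ψ ((p : ℚ_[p]) ^ (-n) * c) = ψ ((p : ℚ_[p]) ^ (-n) * c') ↔ ‖c - c'‖ ≤ (p : ℝ) ^ (-n) := by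
  rw [psi_sub_eq_one_iff hψ, ← mul_sub, norm_mul, Padic.norm_p_zpow, neg_neg]
  rw [mul_comm, ← le_div_iff₀ (zpow_pos pR_pos n), one_div, ← zpow_neg]

/-- scaled character to the power `p` drops the level by one. -/
lemma gl_pow (n : ℤ) (c : ℚ_[p]) :
    (ψ ((p : ℚ_[p]) ^ (-(n+1)) * c)) ^ p = ψ ((p : ℚ_[p]) ^ (-n) * c) := by
  rw [psi_pow_nat hψ]
  congr 1
  rw [← mul_assoc]
  congr 1
  rw [show -(n+1) = -n + (-1) by ring, zpow_add₀ pQ_ne_zero, ← mul_assoc, mul_comm (p:ℚ_[p]),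
    mul_assoc]
  simp [zpow_neg_one, mul_inv_cancel₀ pQ_ne_zero]

open Finset in
/-- Upper bound : `#E ≤ p ^ #I_E`. -/
lemma UB (E : Finset ℚ_[p]) (hE : E.Nonempty) : E.card ≤ p ^ (iset E).card := by
  classical
  induction E using Finset.strongInduction with
  | _ E ih =>
  by_cases h1 : E.card ≤ 1
  · exact le_trans h1 (Nat.one_le_pow _ _ (p_prime (p:=p)).pos)
  push_neg at h1
  obtain ⟨x, hx, y, hy', hxy⟩ := Finset.one_lt_card.1 h1
  have hine : (iset E).Nonempty := ⟨_, mem_iset.2 ⟨x, hx, y, hy', hxy, rfl⟩⟩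
  set m₀ := (iset E).min' hine with hm₀
  set k := (iset E).card with hk
  have hk1 : 1 ≤ k := Finset.card_pos.2 hine
  set g : ℚ_[p] → ℂ := fun c => ψ ((p : ℚ_[p]) ^ (-(m₀ + 1)) * c) with hg
  set T := E.image g with hT
  have hcard : E.card = ∑ z ∈ T, (E.filter fun c => g c = z).card :=
    Finset.card_eq_sum_card_fiberwise (fun c hc => Finset.mem_image_of_mem g hc)
  -- all pairwise distances are ≤ p^{-m₀}
  have hmin : ∀ c ∈ E, ∀ c' ∈ E, c ≠ c' → ‖c - c'‖ ≤ (p : ℝ) ^ (-m₀) := by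
    intro c hc c' hc' hne
    have hmem : (c - c').valuation ∈ iset E := mem_iset.2 ⟨c, hc, c', hc', hne, rfl⟩
    have := Finset.min'_le _ _ hmem
    exact (val_ge_iff_norm (sub_ne_zero.2 hne)).2 this
  -- at most p classes
  obtain ⟨ξ, hξ1, -⟩ := exists_prim_root hψ 1 le_rfl
  rw [pow_one] at hξ1
  have hTcard : T.card ≤ p := by
    have hgx0 : g x ≠ 0 := psi_ne_zero hψ _
    rw [← hξ1.card_nthRootsFinset]
    apply Finset.card_le_card_of_injOn (fun z => z * (g x)⁻¹)
    · intro z hz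
      obtain ⟨c, hc, hcz⟩ := Finset.mem_image.1 hz
      apply (Polynomial.mem_nthRootsFinset (p_prime (p:=p)).pos (1 : ℂ)).2
      rw [mul_pow, ← hcz, hg]
      simp only
      rw [gl_pow hψ, inv_pow, gl_pow hψ]
      by_cases hcx : c = x
      · rw [hcx, mul_inv_cancel₀ (psi_ne_zero hψ _)]
      · have heq : ψ ((p:ℚ_[p]) ^ (-m₀) * c) = ψ ((p:ℚ_[p]) ^ (-m₀) * x) :=
          (gl_eq_iff hψ m₀ c x).2 (hmin c hc x hx hcx)
        rw [heq, mul_inv_cancel₀ (psi_ne_zero hψ _)]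
    · intro z1 h1 z2 h2 he
      have := mul_right_cancel₀ (inv_ne_zero hgx0) he
      exact this
  -- every fiber is a proper subset with smaller iset
  have hm₀mem : m₀ ∈ iset E := (iset E).min'_mem hine
  obtain ⟨u, hu, v, hv, huv, hval_uv⟩ := mem_iset.1 hm₀mem
  have hguv : g u ≠ g v := by
    rw [hg]
    simp only
    rw [Ne, gl_eq_iff hψ]
    push_neg
    rw [norm_eq_zpow_of_val (sub_ne_zero.2 huv) (by omega : (u-v).valuation = -(-m₀))]
    exact (zpow_lt_zpow_iff_right₀ one_lt_pR).2 (by omega)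
  have hfibss : ∀ z ∈ T, (E.filter fun c => g c = z) ⊂ E := by
    intro z hz
    rw [Finset.ssubset_iff_of_subset (Finset.filter_subset _ _)]
    by_cases hzu : g u = z
    · exact ⟨v, hv, by simp [hzu ▸ hguv.symm]⟩
    · exact ⟨u, hu, by simp [hzu]⟩
  have hfibiset : ∀ z ∈ T, iset (E.filter fun c => g c = z) ⊆ (iset E).erase m₀ := by
    intro z hz n hn
    obtain ⟨c, hc, c', hc', hne, hvn⟩ := mem_iset.1 hn
    obtain ⟨hcE, hcz⟩ := Finset.mem_filter.1 hc
    obtain ⟨hc'E, hc'z⟩ := Finset.mem_filter.1 hc'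
    apply Finset.mem_erase.2
    constructor
    · have hdist : ‖c - c'‖ ≤ (p:ℝ) ^ (-(m₀+1)) := by
        apply (gl_eq_iff hψ (m₀+1) c c').1
        show g c = g c'
        rw [hcz, hc'z]
      have := (val_ge_iff_norm (sub_ne_zero.2 hne)).1 hdist
      omega
    · exact mem_iset.2 ⟨c, hcE, c', hc'E, hne, hvn⟩
  have hfibcard : ∀ z ∈ T, (E.filter fun c => g c = z).card ≤ p ^ (k - 1) := by
    intro z hz
    obtain ⟨c, hc, hcz⟩ := Finset.mem_image.1 hz
    have hne : (E.filter fun c => g c = z).Nonempty := ⟨c, Finset.mem_filter.2 ⟨hc, hcz⟩⟩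
    have h1 := ih _ (hfibss z hz) hne
    have h2 : (iset (E.filter fun c => g c = z)).card ≤ k - 1 := by
      calc (iset (E.filter fun c => g c = z)).card ≤ ((iset E).erase m₀).card :=
            Finset.card_le_card (hfibiset z hz)
        _ = k - 1 := by rw [Finset.card_erase_of_mem hm₀mem]
    exact le_trans h1 (Nat.pow_le_pow_right (p_prime (p:=p)).pos h2)
  calc E.card = ∑ z ∈ T, (E.filter fun c => g c = z).card := hcard
    _ ≤ T.card * p ^ (k - 1) := Finset.sum_le_card_nsmul _ _ _ hfibcard
    _ ≤ p * p ^ (k - 1) := Nat.mul_le_mul_right _ hTcard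
    _ = p ^ k := by rw [← pow_succ']; congr 1; omega

end Char

end SpecAux

namespace SpecAux

variable {p : ℕ} [Fact p.Prime] {ψ : ℚ_[p] → ℂ}

section Char

variable (hψ : IsStdChar p ψ)
include hψ

open Finset in
lemma sum_pth_roots : ∑ w ∈ Polynomial.nthRootsFinset p (1 : ℂ), w = 0 := by
  classical
  obtain ⟨ξ, hξ1, -⟩ := exists_prim_root hψ 1 le_rfl
  rw [pow_one] at hξ1
  have hp1 : 1 < p := (p_prime (p:=p)).one_lt
  have himg : (Finset.range p).image (fun i => ξ ^ i) = Polynomial.nthRootsFinset p (1 : ℂ) := by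
    apply Finset.eq_of_subset_of_card_le
    · intro w hw
      obtain ⟨i, hi, hiw⟩ := Finset.mem_image.1 hw
      apply (Polynomial.mem_nthRootsFinset (p_prime (p:=p)).pos (1 : ℂ)).2
      rw [← hiw, ← pow_mul, mul_comm, pow_mul, hξ1.pow_eq_one, one_pow]
    · rw [hξ1.card_nthRootsFinset]
      rw [Finset.card_image_of_injOn]
      · rw [Finset.card_range]
      · intro i hi j hj hij
        exact hξ1.pow_inj (Finset.mem_range.1 hi) (Finset.mem_range.1 hj) hij
  rw [← himg, Finset.sum_image ?_]
  · exact hξ1.geom_sum_eq_zero hp1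
  · intro i hi j hj hij
    exact hξ1.pow_inj (Finset.mem_range.1 hi) (Finset.mem_range.1 hj) hij

open Finset in
/-- Vanishing of character sums for sets of maximal cardinality. -/
lemma vanish (E : Finset ℚ_[p]) (hE : E.Nonempty) (hcard : E.card = p ^ (iset E).card)
    {t : ℚ_[p]} (ht : t ≠ 0) {m : ℤ} (hm : m ∈ iset E) (hval : t.valuation = -m - 1) :
    ∑ c ∈ E, ψ (t * c) = 0 := by
  classical
  induction E using Finset.strongInduction with
  | _ E ih =>
  have hine : (iset E).Nonempty := ⟨m, hm⟩
  set m₀ := (iset E).min' hine with hm₀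
  set k := (iset E).card with hk
  have hk1 : 1 ≤ k := Finset.card_pos.2 hine
  set g : ℚ_[p] → ℂ := fun c => ψ ((p : ℚ_[p]) ^ (-(m₀ + 1)) * c) with hg
  set T := E.image g with hT
  have hmaps : ∀ c ∈ E, g c ∈ T := fun c hc => Finset.mem_image_of_mem g hc
  have hcardsum : E.card = ∑ z ∈ T, (E.filter fun c => g c = z).card :=
    Finset.card_eq_sum_card_fiberwise hmaps
  have hmin : ∀ c ∈ E, ∀ c' ∈ E, c ≠ c' → ‖c - c'‖ ≤ (p : ℝ) ^ (-m₀) := by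
    intro c hc c' hc' hne
    have hmem : (c - c').valuation ∈ iset E := mem_iset.2 ⟨c, hc, c', hc', hne, rfl⟩
    exact (val_ge_iff_norm (sub_ne_zero.2 hne)).2 (Finset.min'_le _ _ hmem)
  obtain ⟨ξ, hξ1, -⟩ := exists_prim_root hψ 1 le_rfl
  rw [pow_one] at hξ1
  obtain ⟨x₀, hx₀⟩ := hE
  -- at most p classes
  have hTcard : T.card ≤ p := by
    have hgx0 : g x₀ ≠ 0 := psi_ne_zero hψ _
    rw [← hξ1.card_nthRootsFinset]
    apply Finset.card_le_card_of_injOn (fun z => z * (g x₀)⁻¹)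
    · intro z hz
      obtain ⟨c, hc, hcz⟩ := Finset.mem_image.1 hz
      apply (Polynomial.mem_nthRootsFinset (p_prime (p:=p)).pos (1 : ℂ)).2
      rw [mul_pow, ← hcz, hg]
      simp only
      rw [gl_pow hψ, inv_pow, gl_pow hψ]
      by_cases hcx : c = x₀
      · rw [hcx, mul_inv_cancel₀ (psi_ne_zero hψ _)]
      · have heq : ψ ((p:ℚ_[p]) ^ (-m₀) * c) = ψ ((p:ℚ_[p]) ^ (-m₀) * x₀) :=
          (gl_eq_iff hψ m₀ c x₀).2 (hmin c hc x₀ hx₀ hcx)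
        rw [heq, mul_inv_cancel₀ (psi_ne_zero hψ _)]
    · intro z1 h1 z2 h2 he
      exact mul_right_cancel₀ (inv_ne_zero hgx0) he
  -- fibers: proper subsets, iset in erase m₀, nonempty
  have hm₀mem : m₀ ∈ iset E := (iset E).min'_mem hine
  obtain ⟨u, hu, v, hv, huv, hval_uv⟩ := mem_iset.1 hm₀mem
  have hguv : g u ≠ g v := by
    rw [hg]
    simp only
    rw [Ne, gl_eq_iff hψ]
    push_neg
    rw [norm_eq_zpow_of_val (sub_ne_zero.2 huv) (by omega : (u-v).valuation = -(-m₀))]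
    exact (zpow_lt_zpow_iff_right₀ one_lt_pR).2 (by omega)
  have hfibss : ∀ z ∈ T, (E.filter fun c => g c = z) ⊂ E := by
    intro z hz
    rw [Finset.ssubset_iff_of_subset (Finset.filter_subset _ _)]
    by_cases hzu : g u = z
    · exact ⟨v, hv, by simp [hzu ▸ hguv.symm]⟩
    · exact ⟨u, hu, by simp [hzu]⟩
  have hfibiset : ∀ z ∈ T, iset (E.filter fun c => g c = z) ⊆ (iset E).erase m₀ := by
    intro z hz n hn
    obtain ⟨c, hc, c', hc', hne, hvn⟩ := mem_iset.1 hn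
    obtain ⟨hcE, hcz⟩ := Finset.mem_filter.1 hc
    obtain ⟨hc'E, hc'z⟩ := Finset.mem_filter.1 hc'
    apply Finset.mem_erase.2
    refine ⟨?_, mem_iset.2 ⟨c, hcE, c', hc'E, hne, hvn⟩⟩
    have hdist : ‖c - c'‖ ≤ (p:ℝ) ^ (-(m₀+1)) := by
      apply (gl_eq_iff hψ (m₀+1) c c').1
      show g c = g c'
      rw [hcz, hc'z]
    have := (val_ge_iff_norm (sub_ne_zero.2 hne)).1 hdist
    omega
  have hfibne : ∀ z ∈ T, (E.filter fun c => g c = z).Nonempty := by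
    intro z hz
    obtain ⟨c, hc, hcz⟩ := Finset.mem_image.1 hz
    exact ⟨c, Finset.mem_filter.2 ⟨hc, hcz⟩⟩
  have hfible : ∀ z ∈ T, (E.filter fun c => g c = z).card ≤ p ^ (k - 1) := by
    intro z hz
    have h1 := UB hψ _ (hfibne z hz)
    have h2 : (iset (E.filter fun c => g c = z)).card ≤ k - 1 := by
      calc (iset (E.filter fun c => g c = z)).card ≤ ((iset E).erase m₀).card :=
            Finset.card_le_card (hfibiset z hz)
        _ = k - 1 := by rw [Finset.card_erase_of_mem hm₀mem]
    exact le_trans h1 (Nat.pow_le_pow_right (p_prime (p:=p)).pos h2)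
  have hppos : 0 < p ^ (k-1) := pow_pos (p_prime (p:=p)).pos _
  -- equality analysis
  have hTp : T.card = p := by
    have h1 : p ^ k ≤ T.card * p ^ (k - 1) := by
      calc p ^ k = E.card := hcard.symm
        _ = ∑ z ∈ T, (E.filter fun c => g c = z).card := hcardsum
        _ ≤ T.card * p ^ (k-1) := Finset.sum_le_card_nsmul _ _ _ hfible
    by_contra hne
    have h2 : T.card < p := lt_of_le_of_ne hTcard hne
    have h3 : T.card * p ^ (k-1) < p * p ^ (k-1) := Nat.mul_lt_mul_of_pos_right h2 hppos
    have h4 : p * p ^ (k-1) = p ^ k := by rw [← pow_succ']; congr 1; omega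
    omega
  have hfibeq : ∀ z ∈ T, (E.filter fun c => g c = z).card = p ^ (k - 1) := by
    by_contra hne
    push_neg at hne
    obtain ⟨z₀, hz₀, hz₀ne⟩ := hne
    have hlt : ∑ z ∈ T, (E.filter fun c => g c = z).card < ∑ z ∈ T, p ^ (k-1) :=
      Finset.sum_lt_sum hfible ⟨z₀, hz₀, lt_of_le_of_ne (hfible z₀ hz₀) hz₀ne⟩
    rw [Finset.sum_const, smul_eq_mul, hTp] at hlt
    have h4 : p * p ^ (k-1) = p ^ k := by rw [← pow_succ']; congr 1; omega
    omega
  have hfibiseteq : ∀ z ∈ T, iset (E.filter fun c => g c = z) = (iset E).erase m₀ := by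
    intro z hz
    apply Finset.eq_of_subset_of_card_le (hfibiset z hz)
    have h1 : p ^ (k-1) ≤ p ^ (iset (E.filter fun c => g c = z)).card := by
      rw [← hfibeq z hz]
      exact UB hψ _ (hfibne z hz)
    have h2 := (Nat.pow_le_pow_iff_right (p_prime (p:=p)).one_lt).1 h1
    rw [Finset.card_erase_of_mem hm₀mem]
    exact h2
  -- split the sum over fibers
  have hsplit : ∑ c ∈ E, ψ (t * c)
      = ∑ z ∈ T, ∑ c ∈ E.filter (fun c => g c = z), ψ (t * c) :=
    (Finset.sum_fiberwise_of_maps_to hmaps _).symm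
  by_cases hmm : m = m₀
  · -- the critical level
    have hnormt : ‖t‖ = (p:ℝ) ^ (m₀ + 1) :=
      norm_eq_zpow_of_val ht (by omega : t.valuation = -(m₀+1))
    set rep : ℂ → ℚ_[p] := fun z => if h : ∃ c ∈ E, g c = z then h.choose else 0 with hrepd
    have hrep : ∀ z ∈ T, rep z ∈ E ∧ g (rep z) = z := by
      intro z hz
      obtain ⟨c, hc, hcz⟩ := Finset.mem_image.1 hz
      have hex : ∃ c ∈ E, g c = z := ⟨c, hc, hcz⟩
      rw [hrepd]
      simp only [dif_pos hex]
      exact ⟨hex.choose_spec.1, hex.choose_spec.2⟩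
    have hinner : ∀ z ∈ T, ∑ c ∈ E.filter (fun c => g c = z), ψ (t * c)
        = (p ^ (k-1) : ℕ) * ψ (t * rep z) := by
      intro z hz
      have : ∀ c ∈ E.filter (fun c => g c = z), ψ (t * c) = ψ (t * rep z) := by
        intro c hc
        obtain ⟨hcE, hcz⟩ := Finset.mem_filter.1 hc
        by_cases hcr : c = rep z
        · rw [hcr]
        · rw [psi_sub_eq_one_iff hψ, ← mul_sub, norm_mul, hnormt]
          have hdist : ‖c - rep z‖ ≤ (p:ℝ) ^ (-(m₀+1)) := by
            apply (gl_eq_iff hψ (m₀+1) c (rep z)).1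
            show g c = g (rep z)
            rw [hcz, (hrep z hz).2]
          calc (p:ℝ) ^ (m₀+1) * ‖c - rep z‖ ≤ (p:ℝ)^(m₀+1) * (p:ℝ)^(-(m₀+1)) :=
                mul_le_mul_of_nonneg_left hdist (le_of_lt (zpow_pos pR_pos _))
            _ = (p:ℝ) ^ (m₀ + 1 + -(m₀+1)) := (zpow_add₀ (ne_of_gt pR_pos) _ _).symm
            _ = 1 := by
                have he : m₀ + 1 + -(m₀+1) = 0 := by ring
                rw [he, zpow_zero]
      rw [Finset.sum_congr rfl this, Finset.sum_const, hfibeq z hz, nsmul_eq_mul]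
    rw [hsplit, Finset.sum_congr rfl hinner, ← Finset.mul_sum]
    -- remains : ∑ z ∈ T, ψ (t * rep z) = 0
    have hz₀T : g x₀ ∈ T := hmaps x₀ hx₀
    set w₀ := ψ (t * rep (g x₀)) with hw₀
    have hw₀0 : w₀ ≠ 0 := psi_ne_zero hψ _
    have hratio : ∀ z ∈ T, ψ (t * rep z) * w₀⁻¹ = ψ (t * (rep z - rep (g x₀))) := by
      intro z hz
      have : ψ (t * rep z) = ψ (t * (rep z - rep (g x₀))) * w₀ := by
        rw [hw₀, ← psi_add hψ]; ring_nf
      rw [this, mul_assoc, mul_inv_cancel₀ hw₀0, mul_one]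
    have hdiam : ∀ z ∈ T, ∀ z' ∈ T, ‖rep z - rep z'‖ ≤ (p:ℝ) ^ (-m₀) := by
      intro z hz z' hz'
      by_cases h : rep z = rep z'
      · rw [h, sub_self, norm_zero]; exact le_of_lt (zpow_pos pR_pos _)
      · exact hmin _ (hrep z hz).1 _ (hrep z' hz').1 h
    have hS : ∀ z ∈ T, (ψ (t * rep z) * w₀⁻¹) ^ p = 1 := by
      intro z hz
      rw [hratio z hz, psi_pow_nat hψ]
      apply psi_of_norm_le_one hψ
      rw [show (p:ℚ_[p]) * (t * (rep z - rep (g x₀))) = (p:ℚ_[p]) * t * (rep z - rep (g x₀)) by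
        ring]
      rw [norm_mul, norm_mul, Padic.norm_p, hnormt]
      calc (p:ℝ)⁻¹ * (p:ℝ)^(m₀+1) * ‖rep z - rep (g x₀)‖
          ≤ (p:ℝ)⁻¹ * (p:ℝ)^(m₀+1) * (p:ℝ)^(-m₀) := by
            apply mul_le_mul_of_nonneg_left (hdiam z hz _ hz₀T)
            positivity
        _ = 1 := by
            rw [← zpow_neg_one, ← zpow_add₀ (ne_of_gt pR_pos), ← zpow_add₀ (ne_of_gt pR_pos)]
            norm_num
    have hinj : ∀ z ∈ T, ∀ z' ∈ T, ψ (t * rep z) * w₀⁻¹ = ψ (t * rep z') * w₀⁻¹ → z = z' := by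
      intro z hz z' hz' he
      by_contra hne
      have hrr : rep z ≠ rep z' := by
        intro h
        have := (hrep z hz).2
        rw [h, (hrep z' hz').2] at this
        exact hne this.symm
      have h1 : ψ (t * rep z) = ψ (t * rep z') := mul_right_cancel₀ (inv_ne_zero hw₀0) he
      have h2 : ‖t * rep z - t * rep z'‖ ≤ 1 := (psi_sub_eq_one_iff hψ _ _).1 h1
      rw [← mul_sub, norm_mul, hnormt] at h2
      -- but the distance is exactly p^{-m₀}
      have hub : ‖rep z - rep z'‖ ≤ (p:ℝ)^(-m₀) := hdiam z hz z' hz'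
      have hlb : ¬ (‖rep z - rep z'‖ ≤ (p:ℝ)^(-(m₀+1))) := by
        intro hcon
        apply hne
        rw [← (hrep z hz).2, ← (hrep z' hz').2]
        exact (gl_eq_iff hψ (m₀+1) _ _).2 hcon
      have hv2 : (rep z - rep z').valuation = m₀ := by
        have ha := (val_ge_iff_norm (sub_ne_zero.2 hrr)).1 hub
        have hb : ¬ ((m₀+1) ≤ (rep z - rep z').valuation) := by
          intro hcon
          exact hlb ((val_ge_iff_norm (sub_ne_zero.2 hrr)).2 hcon)
        omega
      have hnv : ‖rep z - rep z'‖ = (p:ℝ)^(-m₀) :=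
        norm_eq_zpow_of_val (sub_ne_zero.2 hrr) (by omega)
      rw [hnv, ← zpow_add₀ (ne_of_gt pR_pos)] at h2
      have : (p:ℝ)^(m₀+1+ -m₀) = (p:ℝ) := by
        rw [show m₀+1+ -m₀ = 1 by ring, zpow_one]
      rw [this] at h2
      linarith [one_lt_pR (p:=p)]
    have himg2 : T.image (fun z => ψ (t * rep z) * w₀⁻¹) = Polynomial.nthRootsFinset p (1 : ℂ) := by
      apply Finset.eq_of_subset_of_card_le
      · intro w hw
        obtain ⟨z, hz, hzw⟩ := Finset.mem_image.1 hw
        exact (Polynomial.mem_nthRootsFinset (p_prime (p:=p)).pos (1 : ℂ)).2 (hzw ▸ hS z hz)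
      · rw [hξ1.card_nthRootsFinset, Finset.card_image_of_injOn hinj, hTp]
    have hfinal : ∑ z ∈ T, ψ (t * rep z) = 0 := by
      have h1 : ∑ z ∈ T, ψ (t * rep z) * w₀⁻¹ = 0 := by
        have h2 := Finset.sum_image (f := fun w : ℂ => w)
          (g := fun z => ψ (t * rep z) * w₀⁻¹) (s := T) hinj
        rw [himg2] at h2
        rw [← h2]
        exact sum_pth_roots hψ
      have h2 : (∑ z ∈ T, ψ (t * rep z)) * w₀⁻¹ = 0 := by
        rw [Finset.sum_mul]; exact h1
      rcases mul_eq_zero.1 h2 with h | h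
      · exact h
      · exact absurd h (inv_ne_zero hw₀0)
    rw [hfinal, mul_zero]
  · -- recurse into fibers
    rw [hsplit]
    apply Finset.sum_eq_zero
    intro z hz
    apply ih _ (hfibss z hz) (hfibne z hz)
    · rw [hfibeq z hz, hfibiseteq z hz, Finset.card_erase_of_mem hm₀mem]
    · rw [hfibiseteq z hz]
      exact Finset.mem_erase.2 ⟨hmm, hm⟩

end Char

end SpecAux

namespace SpecAux

variable {p : ℕ} [Fact p.Prime] {ψ : ℚ_[p] → ℂ}

open scoped Classical in
/-- Equidistribution of a finite set at level `m`. -/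
def Eqd (E : Finset ℚ_[p]) (m : ℤ) : Prop :=
  ∀ x ∈ E, ∀ y : ℚ_[p], ‖y - x‖ ≤ (p : ℝ) ^ (-m) →
    (E.filter fun c => ‖c - y‖ ≤ (p : ℝ) ^ (-(m+1))).card
      = (E.filter fun c => ‖c - x‖ ≤ (p : ℝ) ^ (-(m+1))).card

lemma norm3 (x y z : ℚ_[p]) {C : ℝ} (h1 : ‖x‖ ≤ C) (h2 : ‖y‖ ≤ C) (h3 : ‖z‖ ≤ C) :
    ‖x + y + z‖ ≤ C :=
  le_trans (Padic.nonarchimedean _ _)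
    (max_le (le_trans (Padic.nonarchimedean _ _) (max_le h1 h2)) h3)

section Char

variable (hψ : IsStdChar p ψ)
include hψ

lemma eqd_of_sum_zero {E : Finset ℚ_[p]} {t : ℚ_[p]} (ht : t ≠ 0) {m : ℤ}
    (hval : t.valuation = -m - 1) (h0 : ∑ c ∈ E, ψ (t * c) = 0) : Eqd E m := by
  classical
  intro x hx y hy
  have hnormt : ‖t‖ = (p:ℝ) ^ (m+1) := norm_eq_zpow_of_val ht (by omega)
  have hy' : ψ ((p : ℚ_[p]) * t * (y - x)) = 1 := by
    apply psi_of_norm_le_one hψ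
    rw [norm_mul, norm_mul, Padic.norm_p, hnormt]
    calc (p:ℝ)⁻¹ * (p:ℝ)^(m+1) * ‖y - x‖ ≤ (p:ℝ)⁻¹ * (p:ℝ)^(m+1) * (p:ℝ)^(-m) := by
          apply mul_le_mul_of_nonneg_left hy
          positivity
      _ = (p:ℝ) ^ (-1:ℤ) * (p:ℝ)^(m+1) * (p:ℝ)^(-m) := by rw [zpow_neg_one]
      _ = (p:ℝ) ^ (-1 + (m+1) + -m) := by
          rw [← zpow_add₀ (ne_of_gt pR_pos), ← zpow_add₀ (ne_of_gt pR_pos)]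
      _ = 1 := by rw [show (-1 + (m+1) + -m : ℤ) = 0 by ring, zpow_zero]
  have hAE := AE hψ hx h0 hy'
  have hconv : ∀ z : ℚ_[p], (E.filter fun c => ψ (t*(c-z)) = 1)
      = (E.filter fun c => ‖c - z‖ ≤ (p:ℝ)^(-(m+1))) := by
    intro z
    apply Finset.filter_congr
    intro c _
    rw [psi_eq_one_iff hψ, norm_mul, hnormt]
    rw [mul_comm, ← le_div_iff₀ (zpow_pos pR_pos _), one_div, ← zpow_neg]
  rw [hconv y, hconv x] at hAE
  convert hAE using 2
end Char

open Finset in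
/-- Lower bound from equidistribution at every level of `S`. -/
lemma LB (S : Finset ℤ) (E : Finset ℚ_[p]) (hE : E.Nonempty)
    (heqd : ∀ m ∈ S, Eqd E m) : p ^ S.card ≤ E.card := by
  classical
  induction S using Finset.strongInduction generalizing E with
  | _ S ih =>
  rcases S.eq_empty_or_nonempty with hS | hS
  · rw [hS]
    simpa using Finset.card_pos.2 hE
  set m₀ := S.min' hS with hm₀
  have hm₀S : m₀ ∈ S := S.min'_mem hS
  obtain ⟨x₀, hx₀⟩ := hE
  set Y : ℕ → ℚ_[p] := fun a => x₀ + (a : ℚ_[p]) * (p:ℚ_[p]) ^ m₀ with hY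
  set G : ℕ → Finset ℚ_[p] :=
    fun a => E.filter (fun c => ‖c - Y a‖ ≤ (p:ℝ) ^ (-(m₀+1))) with hG
  have hYdist : ∀ a : ℕ, ‖Y a - x₀‖ ≤ (p:ℝ) ^ (-m₀) := by
    intro a
    rw [hY]
    simp only [add_sub_cancel_left]
    rw [norm_mul, Padic.norm_p_zpow]
    have h1 : ‖((a:ℤ) : ℚ_[p])‖ ≤ 1 := Padic.norm_int_le_one _
    rw [Int.cast_natCast] at h1
    calc ‖(a:ℚ_[p])‖ * (p:ℝ)^(-m₀) ≤ 1 * (p:ℝ)^(-m₀) :=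
          mul_le_mul_of_nonneg_right h1 (le_of_lt (zpow_pos pR_pos _))
      _ = (p:ℝ)^(-m₀) := one_mul _
  have hx₀ball : ∀ n : ℤ, x₀ ∈ E.filter (fun c => ‖c - x₀‖ ≤ (p:ℝ) ^ (-n)) := by
    intro n
    apply Finset.mem_filter.2 ⟨hx₀, ?_⟩
    rw [sub_self, norm_zero]
    exact le_of_lt (zpow_pos pR_pos _)
  have hGne : ∀ a : ℕ, (G a).Nonempty := by
    intro a
    have h := heqd m₀ hm₀S x₀ hx₀ (Y a) (hYdist a)
    apply Finset.card_pos.1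
    rw [hG]
    simp only
    rw [h]
    exact Finset.card_pos.2 ⟨x₀, hx₀ball (m₀+1)⟩
  have hGdisj : ∀ a < p, ∀ b < p, a ≠ b → Disjoint (G a) (G b) := by
    intro a ha b hb hab
    rw [Finset.disjoint_left]
    intro c hca hcb
    obtain ⟨-, h1⟩ := Finset.mem_filter.1 hca
    obtain ⟨-, h2⟩ := Finset.mem_filter.1 hcb
    have h3 : ‖Y a - Y b‖ ≤ (p:ℝ)^(-(m₀+1)) := by
      have heq : Y a - Y b = (Y a - c) + (c - Y b) + 0 := by ring
      rw [heq]
      apply norm3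
      · rw [norm_sub_rev]; exact h1
      · exact h2
      · rw [norm_zero]; exact le_of_lt (zpow_pos pR_pos _)
    have h4 : ‖Y a - Y b‖ = (p:ℝ)^(-m₀) := by
      rw [show Y a - Y b = (((a:ℤ) - (b:ℤ) : ℤ) : ℚ_[p]) * (p:ℚ_[p])^m₀ by
        rw [hY]; push_cast; ring]
      rw [norm_mul, Padic.norm_p_zpow]
      have hne0 : (a:ℤ) - b ≠ 0 := sub_ne_zero.2 (by exact_mod_cast hab)
      have hnd : ¬ ((p:ℤ) ∣ (a:ℤ) - (b:ℤ)) := by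
        intro hdvd
        have habs : |(a:ℤ) - (b:ℤ)| < p := by rw [abs_sub_lt_iff]; constructor <;> omega
        have := Int.le_of_dvd (abs_pos.2 hne0) ((dvd_abs _ _).2 hdvd)
        omega
      have h5 : ‖(((a:ℤ)-(b:ℤ) : ℤ):ℚ_[p])‖ = 1 := by
        apply le_antisymm (Padic.norm_int_le_one _)
        by_contra h
        push_neg at h
        exact hnd (Padic.norm_intCast_lt_one_iff.1 h)
      rw [h5, one_mul]
    rw [h4] at h3
    have := (zpow_lt_zpow_iff_right₀ (one_lt_pR (p:=p)) (m := -(m₀+1)) (n := -m₀)).2 (by omega)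
    linarith
  have hGsub : ∀ m ∈ S.erase m₀, ∀ a : ℕ, Eqd (G a) m := by
    intro m hm a
    obtain ⟨hmne, hmS⟩ := Finset.mem_erase.1 hm
    have hmgt : m₀ + 1 ≤ m := by
      have := S.min'_le m hmS
      rw [← hm₀] at this
      omega
    intro x hxGa y hyx
    obtain ⟨hxE, hxball⟩ := Finset.mem_filter.1 hxGa
    have hsub : ∀ z : ℚ_[p], ‖z - x‖ ≤ (p:ℝ)^(-m) → ∀ c ∈ E,
        ‖c - z‖ ≤ (p:ℝ)^(-(m+1)) → ‖c - Y a‖ ≤ (p:ℝ)^(-(m₀+1)) := by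
      intro z hz c _ hc
      have heq : c - Y a = (c - z) + (z - x) + (x - Y a) := by ring
      rw [heq]
      apply norm3
      · calc ‖c - z‖ ≤ (p:ℝ)^(-(m+1)) := hc
          _ ≤ (p:ℝ)^(-(m₀+1)) :=
              (zpow_le_zpow_iff_right₀ (one_lt_pR (p:=p))).2 (by omega)
      · calc ‖z - x‖ ≤ (p:ℝ)^(-m) := hz
          _ ≤ (p:ℝ)^(-(m₀+1)) :=
              (zpow_le_zpow_iff_right₀ (one_lt_pR (p:=p))).2 (by omega)
      · exact hxball
    have hfeq : ∀ z : ℚ_[p], ‖z - x‖ ≤ (p:ℝ)^(-m) →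
        (G a).filter (fun c => ‖c - z‖ ≤ (p:ℝ)^(-(m+1)))
          = E.filter (fun c => ‖c - z‖ ≤ (p:ℝ)^(-(m+1))) := by
      intro z hz
      ext c
      simp only [hG, Finset.mem_filter]
      constructor
      · rintro ⟨⟨h1, h2⟩, h3⟩
        exact ⟨h1, h3⟩
      · rintro ⟨h1, h3⟩
        exact ⟨⟨h1, hsub z hz c h1 h3⟩, h3⟩
    rw [hfeq y hyx, hfeq x (by rw [sub_self, norm_zero]; exact le_of_lt (zpow_pos pR_pos _))]
    exact heqd m hmS x hxE y hyx
  have hcards : ∀ a : ℕ, p ^ (S.erase m₀).card ≤ (G a).card := by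
    intro a
    exact ih (S.erase m₀) (Finset.erase_ssubset hm₀S) (G a) (hGne a)
      (fun m hm => hGsub m hm a)
  have hbiUnion : (Finset.range p).biUnion G ⊆ E := by
    intro c hc
    obtain ⟨a, _, hca⟩ := Finset.mem_biUnion.1 hc
    exact Finset.filter_subset _ _ hca
  have hsum : ∑ a ∈ Finset.range p, (G a).card = ((Finset.range p).biUnion G).card :=
    (Finset.card_biUnion (fun a ha b hb hab =>
      hGdisj a (Finset.mem_range.1 ha) b (Finset.mem_range.1 hb) hab)).symm
  have hScard : 1 ≤ S.card := Finset.card_pos.2 hS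
  calc p ^ S.card = p * p ^ (S.card - 1) := by rw [← pow_succ']; congr 1; omega
    _ = ∑ _a ∈ Finset.range p, p ^ (S.card - 1) := by
        rw [Finset.sum_const, Finset.card_range, smul_eq_mul]
    _ ≤ ∑ a ∈ Finset.range p, (G a).card := by
        apply Finset.sum_le_sum
        intro a _
        have := hcards a
        rwa [Finset.card_erase_of_mem hm₀S] at this
    _ = ((Finset.range p).biUnion G).card := hsum
    _ ≤ E.card := Finset.card_le_card hbiUnion

end SpecAux

namespace SpecAux

variable {p : ℕ} [Fact p.Prime] {ψ : ℚ_[p] → ℂ}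

lemma norm_sum_lt {α : Type*} (s : Finset α) (f : α → ℚ_[p]) {C : ℝ} (hC : 0 < C)
    (h : ∀ b ∈ s, ‖f b‖ < C) : ‖∑ b ∈ s, f b‖ < C := by
  classical
  induction s using Finset.induction_on with
  | empty => simpa using hC
  | @insert a s' hx ih =>
    rw [Finset.sum_insert hx]
    apply lt_of_le_of_lt (Padic.nonarchimedean _ _)
    apply max_lt (h a (Finset.mem_insert_self a s'))
    exact ih (fun b hb => h b (Finset.mem_insert_of_mem hb))

lemma norm_sum_eq_dominant {α : Type*} (s : Finset α) (f : α → ℚ_[p]) {a : α}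
    (ha : a ∈ s) (ha0 : f a ≠ 0) (h : ∀ b ∈ s, b ≠ a → ‖f b‖ < ‖f a‖) :
    ‖∑ b ∈ s, f b‖ = ‖f a‖ := by
  classical
  rw [← Finset.add_sum_erase _ f ha]
  have hC : 0 < ‖f a‖ := norm_pos_iff.2 ha0
  have h2 : ‖∑ b ∈ s.erase a, f b‖ < ‖f a‖ := by
    apply norm_sum_lt _ _ hC
    intro b hb
    exact h b (Finset.mem_of_mem_erase hb) (Finset.ne_of_mem_erase hb)
  rw [Padic.add_eq_max_of_ne (ne_of_gt h2)]
  exact max_eq_left (le_of_lt h2)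

end SpecAux

open SpecAux in
/-- the uniform probability measure on a nonempty finite set `F ⊆ ℚ_p` is a
spectral measure iff `#F = p^{#I_F}`. -/
theorem finite_spectral_iff_card_eq_pow
    (p : ℕ) [Fact p.Prime] (ψ : ℚ_[p] → ℂ) (hψ : IsStdChar p ψ)
    (F : Finset ℚ_[p]) (hFne : F.Nonempty) :
    (∃ Λ : Finset ℚ_[p], Λ.card = F.card ∧
      ∀ l ∈ Λ, ∀ l' ∈ Λ, l ≠ l' → ∑ c ∈ F, ψ ((l - l') * c) = 0) ↔
    F.card = p ^ (pOrders p (↑F : Set ℚ_[p])).ncard := by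
  classical
  have hiso : (pOrders p (↑F : Set ℚ_[p])).ncard = (iset F).card := by
    rw [pOrders_eq_iset, Set.ncard_coe_finset]
  rw [hiso]
  constructor
  · rintro ⟨Λ, hΛcard, horth⟩
    set N := F.card with hN
    have hN0 : 0 < N := Finset.card_pos.2 hFne
    have hΛne : Λ.Nonempty := Finset.card_pos.1 (by rw [hΛcard]; exact hN0)
    have hec : Fintype.card ↥Λ = Fintype.card ↥F := by
      rw [Fintype.card_coe, Fintype.card_coe, hΛcard]
    set e : ↥Λ ≃ ↥F := Fintype.equivOfCardEq hec with he
    set B : Matrix ↥F ↥F ℂ := fun i j => ψ ((↑(e.symm i) : ℚ_[p]) * (↑j : ℚ_[p])) with hB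
    have hpsiconj : ∀ x : ℚ_[p], star (ψ x) = ψ (-x) := by
      intro x
      have h1 : ψ x * star (ψ x) = 1 := by
        rw [show star (ψ x) = (starRingEnd ℂ) (ψ x) from rfl]
        rw [Complex.mul_conj, ← Complex.sq_norm, hψ.2.2.1, one_pow, Complex.ofReal_one]
      have h2 : ψ x * ψ (-x) = 1 := by
        rw [← psi_add hψ, add_neg_cancel, psi_zero hψ]
      exact mul_left_cancel₀ (psi_ne_zero hψ x) (h1.trans h2.symm)
    have hterm : ∀ (i i' : ↥F) (j : ↥F),
        ψ ((↑(e.symm i) : ℚ_[p]) * ↑j) * star (ψ ((↑(e.symm i') : ℚ_[p]) * ↑j))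
          = ψ (((↑(e.symm i) : ℚ_[p]) - ↑(e.symm i')) * ↑j) := by
      intro i i' j
      rw [hpsiconj, ← psi_add hψ]
      congr 1
      ring
    have hBBH : B * B.conjTranspose = (N : ℂ) • 1 := by
      ext i i'
      rw [Matrix.mul_apply]
      simp only [Matrix.conjTranspose_apply]
      simp only [hB]
      rw [Finset.sum_congr rfl (fun j _ => hterm i i' j)]
      by_cases hii : i = i'
      · subst hii
        simp only [sub_self, zero_mul, psi_zero hψ]
        rw [Finset.sum_const, Finset.card_univ, Fintype.card_coe, nsmul_eq_mul, mul_one,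
          Matrix.smul_apply, Matrix.one_apply_eq, smul_eq_mul, mul_one]
      · have hll : (↑(e.symm i) : ℚ_[p]) ≠ ↑(e.symm i') := by
          intro h
          exact hii (e.symm.injective (Subtype.coe_injective h))
        have h0 := horth _ (e.symm i).2 _ (e.symm i').2 hll
        rw [Matrix.smul_apply, Matrix.one_apply_ne hii, smul_zero]
        rw [← Finset.sum_coe_sort F
          (fun c => ψ (((↑(e.symm i) : ℚ_[p]) - ↑(e.symm i')) * c))] at h0
        exact h0
    have hNC : (N : ℂ) ≠ 0 := Nat.cast_ne_zero.2 (by omega)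
    have hBHB : B.conjTranspose * B = (N : ℂ) • 1 := by
      have h1 : B * ((N:ℂ)⁻¹ • B.conjTranspose) = 1 := by
        rw [Matrix.mul_smul, hBBH, smul_smul, inv_mul_cancel₀ hNC, one_smul]
      have h2 : ((N:ℂ)⁻¹ • B.conjTranspose) * B = 1 := mul_eq_one_comm.1 h1
      calc B.conjTranspose * B = (N:ℂ) • (((N:ℂ)⁻¹ • B.conjTranspose) * B) := by
            rw [Matrix.smul_mul, smul_smul, mul_inv_cancel₀ hNC, one_smul]
        _ = (N:ℂ) • 1 := by rw [h2]
    have hcol : ∀ x ∈ F, ∀ y ∈ F, x ≠ y → ∑ l ∈ Λ, ψ ((x - y) * l) = 0 := by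
      intro x hx y hy hxy
      have hne2 : (⟨y, hy⟩ : ↥F) ≠ ⟨x, hx⟩ := by
        intro h
        exact hxy (Subtype.mk_eq_mk.1 h).symm
      calc ∑ l ∈ Λ, ψ ((x - y) * l)
          = ∑ l : ↥Λ, ψ ((x - y) * (↑l : ℚ_[p])) :=
            (Finset.sum_coe_sort Λ (fun l => ψ ((x - y) * l))).symm
        _ = ∑ i : ↥F, ψ ((x - y) * (↑(e.symm i) : ℚ_[p])) :=
            (Equiv.sum_comp e.symm (fun l : ↥Λ => ψ ((x - y) * (↑l : ℚ_[p])))).symm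
        _ = (B.conjTranspose * B) ⟨y, hy⟩ ⟨x, hx⟩ := by
            rw [Matrix.mul_apply]
            apply Finset.sum_congr rfl
            intro i _
            rw [Matrix.conjTranspose_apply]
            show ψ ((x - y) * (↑(e.symm i) : ℚ_[p]))
              = star (ψ ((↑(e.symm i) : ℚ_[p]) * ↑(⟨y, hy⟩ : ↥F)))
                * ψ ((↑(e.symm i) : ℚ_[p]) * ↑(⟨x, hx⟩ : ↥F))
            rw [hpsiconj, ← psi_add hψ]
            congr 1
            show (x - y) * (↑(e.symm i) : ℚ_[p]) = -((↑(e.symm i) : ℚ_[p]) * y)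
              + (↑(e.symm i) : ℚ_[p]) * x
            ring
        _ = ((N:ℂ) • (1 : Matrix ↥F ↥F ℂ)) ⟨y, hy⟩ ⟨x, hx⟩ := by rw [hBHB]
        _ = 0 := by rw [Matrix.smul_apply, Matrix.one_apply_ne hne2, smul_zero]
    have heqd : ∀ m ∈ iset F, Eqd F m := by
      intro m hm
      obtain ⟨x, hx, y, hy, hxy, hvalm⟩ := mem_iset.1 hm
      have hc0 := hcol x hx y hy hxy
      obtain ⟨htne, l, hl, l', hl', hll, hlval⟩ := exists_pair hψ hΛne hc0
      have hrow := horth l hl l' hl' hll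
      apply eqd_of_sum_zero hψ (sub_ne_zero.2 hll) ?_ hrow
      rw [hlval, hvalm]
    have hlow : p ^ (iset F).card ≤ N := LB (iset F) F hFne heqd
    have hup : N ≤ p ^ (iset F).card := by
      have h2 := UB hψ Λ hΛne
      have h3 : iset Λ ⊆ (iset F).image (fun m => -m - 1) := by
        intro n hn
        obtain ⟨a, ha, b, hb, hab, hvn⟩ := mem_iset.1 hn
        have hrow := horth a ha b hb hab
        obtain ⟨htne, x, hx, y, hy, hxy, hvalxy⟩ := exists_pair hψ hFne hrow
        apply Finset.mem_image.2
        refine ⟨(x - y).valuation, mem_iset.2 ⟨x, hx, y, hy, hxy, rfl⟩, ?_⟩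
        rw [hvn] at hvalxy
        omega
      have h4 : (iset Λ).card ≤ (iset F).card :=
        le_trans (Finset.card_le_card h3) Finset.card_image_le
      calc N = Λ.card := hΛcard.symm
        _ ≤ p ^ (iset Λ).card := h2
        _ ≤ p ^ (iset F).card := Nat.pow_le_pow_right (p_prime (p:=p)).pos h4
    omega
  · intro hcard
    set I := iset F with hI
    set k := I.card with hk
    set toSum : (↥I → Fin p) → ℚ_[p] :=
      fun a => ∑ m ∈ I.attach, ((a m : ℕ) : ℚ_[p]) * (p:ℚ_[p]) ^ (-(m:ℤ) - 1) with hts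
    have hdiff : ∀ a b : ↥I → Fin p, a ≠ b →
        ∃ M : ℤ, M ∈ I ∧ toSum a - toSum b ≠ 0 ∧ (toSum a - toSum b).valuation = -M - 1 := by
      intro a b hab
      set f : ↥I → ℚ_[p] :=
        fun m => (((a m : ℕ) : ℚ_[p]) - ((b m : ℕ) : ℚ_[p])) * (p:ℚ_[p]) ^ (-(m:ℤ) - 1)
        with hf
      have hsum : toSum a - toSum b = ∑ m ∈ I.attach, f m := by
        rw [hts, ← Finset.sum_sub_distrib]
        apply Finset.sum_congr rfl
        intro m _
        rw [hf]
        ring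
      set D := I.attach.filter (fun m => a m ≠ b m) with hD
      have hDne : D.Nonempty := by
        obtain ⟨m, hm⟩ := Function.ne_iff.1 hab
        exact ⟨m, Finset.mem_filter.2 ⟨Finset.mem_attach _ _, hm⟩⟩
      set M := D.max' hDne with hM
      have hMD : M ∈ D := D.max'_mem hDne
      have hMne : a M ≠ b M := (Finset.mem_filter.1 hMD).2
      have hfnorm : ∀ m : ↥I, a m ≠ b m → ‖f m‖ = (p:ℝ) ^ ((m:ℤ) + 1) := by
        intro m hm
        rw [hf]
        simp only
        rw [norm_mul, Padic.norm_p_zpow]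
        have hcast : ((a m : ℕ) : ℚ_[p]) - ((b m : ℕ) : ℚ_[p])
            = (((a m : ℕ) : ℤ) - ((b m : ℕ) : ℤ) : ℤ) := by push_cast; ring
        have hne0 : ((a m : ℕ) : ℤ) - ((b m : ℕ) : ℤ) ≠ 0 := by
          simp only [ne_eq, sub_eq_zero]
          intro h
          exact hm (Fin.ext (by exact_mod_cast h))
        have hnd : ¬ ((p:ℤ) ∣ ((a m : ℕ) : ℤ) - ((b m : ℕ) : ℤ)) := by
          intro hdvd
          have h1 : |((a m : ℕ) : ℤ) - ((b m : ℕ) : ℤ)| < p := by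
            rw [abs_sub_lt_iff]
            have := (a m).2
            have := (b m).2
            omega
          have := Int.le_of_dvd (abs_pos.2 hne0) ((dvd_abs _ _).2 hdvd)
          omega
        have h5 : ‖((((a m : ℕ) : ℤ) - ((b m : ℕ) : ℤ) : ℤ) : ℚ_[p])‖ = 1 := by
          apply le_antisymm (Padic.norm_int_le_one _)
          by_contra h
          push_neg at h
          exact hnd (Padic.norm_intCast_lt_one_iff.1 h)
        rw [hcast, h5, one_mul]
        congr 1
        ring
      have hfM : ‖f M‖ = (p:ℝ) ^ ((M:ℤ) + 1) := hfnorm M hMne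
      have hfM0 : f M ≠ 0 := by
        intro h
        rw [h, norm_zero] at hfM
        exact absurd hfM.symm (ne_of_gt (zpow_pos pR_pos _))
      have hdom : ∀ m ∈ I.attach, m ≠ M → ‖f m‖ < ‖f M‖ := by
        intro m _ hmM
        by_cases hmab : a m = b m
        · rw [hf]
          simp only
          rw [hmab, sub_self, zero_mul, norm_zero, hfM]
          exact zpow_pos pR_pos _
        · have hmD : m ∈ D := Finset.mem_filter.2 ⟨Finset.mem_attach _ _, hmab⟩
          have hle : m ≤ M := D.le_max' m hmD
          have hlt : (m : ℤ) < (M : ℤ) := by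
            rcases lt_or_eq_of_le hle with h | h
            · exact_mod_cast h
            · exact absurd h hmM
          rw [hfnorm m hmab, hfM]
          exact (zpow_lt_zpow_iff_right₀ one_lt_pR).2 (by omega)
      have hnorm : ‖toSum a - toSum b‖ = (p:ℝ) ^ ((M:ℤ) + 1) := by
        rw [hsum, norm_sum_eq_dominant I.attach f (Finset.mem_attach _ _) hfM0 hdom, hfM]
      have hne : toSum a - toSum b ≠ 0 := by
        intro h
        rw [h, norm_zero] at hnorm
        exact absurd hnorm.symm (ne_of_gt (zpow_pos pR_pos _))
      refine ⟨(M : ℤ), M.2, hne, ?_⟩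
      have := valuation_eq_of_norm hne hnorm
      omega
    refine ⟨Finset.image toSum Finset.univ, ?_, ?_⟩
    · rw [Finset.card_image_of_injOn, Finset.card_univ, Fintype.card_fun,
        Fintype.card_fin, Fintype.card_coe]
      · rw [← hk, hcard]
      · intro a _ b _ hab
        by_contra hne
        obtain ⟨M, _, hne0, _⟩ := hdiff a b hne
        exact hne0 (by rw [hab, sub_self])
    · intro l hl l' hl' hll
      obtain ⟨a, _, ha⟩ := Finset.mem_image.1 hl
      obtain ⟨b, _, hb⟩ := Finset.mem_image.1 hl'
      have hab : a ≠ b := by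
        intro h
        exact hll (by rw [← ha, ← hb, h])
      obtain ⟨M, hM, hne0, hval⟩ := hdiff a b hab
      have hl_eq : l - l' = toSum a - toSum b := by rw [← ha, ← hb]
      rw [hl_eq]
      exact vanish hψ F hFne hcard (hl_eq ▸ (hl_eq ▸ hne0)) hM hval
end
end
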